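/- arXiv:1006.3358 — 4 statements merged into one kernel-verified Lean document; each statement's English description precedes it below -/
import Mathlib

section
/- Let X be a complex Banach space and let A be a closed subspace of L∞(ℝ₊,X) that is BUC-invariant. Then C₀(ℝ₊,X) ⊆ A. -/
open MeasureTheory Filter Topology Complex Set

noncomputable section

/-- Convolution `(F ⋆ g)(t) = ∫ F (t - s) g s ds`. -/
def convol {X : Type*} [NormedAddCommGroup X] [NormedSpace ℂ X]
    (F : ℝ → X) (g : ℝ → ℂ) (t : ℝ) : X :=
  ∫ s : ℝ, g s • F (t - s)

/-- Fourier transform `f̂ ω = ∫ e^{-iωt} f t dt`. -/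
def ft (f : ℝ → ℂ) (ω : ℝ) : ℂ :=
  ∫ t : ℝ, Complex.exp (-(Complex.I * (ω : ℂ) * (t : ℂ))) * f t

/-- Membership in (a pointwise model of) `L^∞(J, X)`:
essentially the bounded measurable functions on `J`, extended by `0` off `J`. -/
def MemLinfOn {X : Type*} [NormedAddCommGroup X] (J : Set ℝ) (F : ℝ → X) : Prop :=
  AEStronglyMeasurable F volume ∧ (∃ C, ∀ t, ‖F t‖ ≤ C) ∧ ∀ t ∉ J, F t = 0

/-- `A` is a closed subspace of `L^∞(J, X)` (closed in the sup norm). -/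
structure ClosedSubspaceLinf {X : Type*} [NormedAddCommGroup X] [NormedSpace ℂ X]
    (J : Set ℝ) (A : Set (ℝ → X)) : Prop where
  mem_linf : ∀ F ∈ A, MemLinfOn J F
  zero_mem : (fun _ : ℝ => (0 : X)) ∈ A
  add_mem : ∀ F ∈ A, ∀ G ∈ A, (fun t => F t + G t) ∈ A
  smul_mem : ∀ (c : ℂ), ∀ F ∈ A, (fun t => c • F t) ∈ A
  closed : ∀ F : ℝ → X, MemLinfOn J F →
    (∀ ε > 0, ∃ G ∈ A, ∀ t : ℝ, ‖F t - G t‖ ≤ ε) → F ∈ A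

/-- Condition (2.3): `(𝔉 * f)|J ∈ A` for all `F ∈ A`, `f ∈ L¹(ℝ)`. -/
def Cond23 {X : Type*} [NormedAddCommGroup X] [NormedSpace ℂ X]
    (J : Set ℝ) (A : Set (ℝ → X)) : Prop :=
  ∀ F ∈ A, ∀ f : ℝ → ℂ, Integrable f volume → J.indicator (convol F f) ∈ A

/-- `A` is `BUC`-invariant. -/
def BUCInvariant {X : Type*} [NormedAddCommGroup X] (J : Set ℝ) (A : Set (ℝ → X)) : Prop :=
  ∀ φ : ℝ → X, UniformContinuous φ → (∃ C, ∀ t, ‖φ t‖ ≤ C) →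
    J.indicator φ ∈ A → ∀ a : ℝ, J.indicator (fun t => φ (t + a)) ∈ A

/-- `C₀(J, X)`: continuous on `J`, zero off `J`, vanishing at infinity. -/
def C0 {X : Type*} [NormedAddCommGroup X] (J : Set ℝ) : Set (ℝ → X) :=
  {u | ContinuousOn u J ∧ (∀ t ∉ J, u t = 0) ∧ Tendsto u (cocompact ℝ) (nhds 0)}

/-- Absolutely regular: locally integrable and `φ • F` integrable for all Schwartz `φ`. -/
def AbsolutelyRegular {X : Type*} [NormedAddCommGroup X] [NormedSpace ℂ X] (F : ℝ → X) : Prop :=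
  LocallyIntegrable F volume ∧
    ∀ φ : SchwartzMap ℝ ℂ, Integrable (fun t => φ t • F t) volume

/-- Reduced spectrum of `H` relative to `(A, 𝓢(ℝ))`. -/
def spS {X : Type*} [NormedAddCommGroup X] [NormedSpace ℂ X]
    (J : Set ℝ) (A : Set (ℝ → X)) (H : ℝ → X) : Set ℝ :=
  {ω | ∀ φ : SchwartzMap ℝ ℂ,
      J.indicator (convol H (fun t => φ t)) ∈ A → ft (fun t => φ t) ω = 0}

/-- Reduced spectrum of `H` relative to `(A, L¹(ℝ))`. -/
def spL1 {X : Type*} [NormedAddCommGroup X] [NormedSpace ℂ X]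
    (J : Set ℝ) (A : Set (ℝ → X)) (H : ℝ → X) : Set ℝ :=
  {ω | ∀ f : ℝ → ℂ, Integrable f volume →
      J.indicator (convol H f) ∈ A → ft f ω = 0}

/-- Reduced spectrum of `H` relative to `(A, 𝓓(ℝ))` (test functions). -/
def spD {X : Type*} [NormedAddCommGroup X] [NormedSpace ℂ X]
    (J : Set ℝ) (A : Set (ℝ → X)) (H : ℝ → X) : Set ℝ :=
  {ω | ∀ φ : ℝ → ℂ, ContDiff ℝ (⊤ : ℕ∞) φ → HasCompactSupport φ →
      J.indicator (convol H φ) ∈ A → ft φ ω = 0}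

/-- `F` is ergodic on `J` with mean `m`:
`sup_{t ∈ J} ‖(1/T) ∫₀^T F (t+s) ds - m‖ → 0` as `T → ∞`. -/
def ErgodicMean {X : Type*} [NormedAddCommGroup X] [NormedSpace ℂ X]
    (J : Set ℝ) (F : ℝ → X) (m : X) : Prop :=
  ∀ ε > 0, ∃ T₀ : ℝ, 0 < T₀ ∧ ∀ T ≥ T₀, ∀ t ∈ J,
    ‖(1 / T) • (∫ s in (0:ℝ)..T, F (t + s)) - m‖ ≤ ε

/-- `F` is ergodic on `J` (with some mean). -/
def IsErgodic {X : Type*} [NormedAddCommGroup X] [NormedSpace ℂ X]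
    (J : Set ℝ) (F : ℝ → X) : Prop :=
  ∃ m : X, ErgodicMean J F m

/-- `L¹_{loc,0}(J, X)`: locally integrable on `J` and vanishing at infinity within `J`. -/
def L1loc0 {X : Type*} [NormedAddCommGroup X] (J : Set ℝ) (ξ : ℝ → X) : Prop :=
  LocallyIntegrableOn ξ J volume ∧ Tendsto ξ (cocompact ℝ ⊓ 𝓟 J) (nhds 0)

/-- Slowly oscillating on `J`: `F = u + ξ` on `J` with `u` uniformly continuous
and `ξ ∈ L¹_{loc,0}(J, X)`. -/
def SOOn {X : Type*} [NormedAddCommGroup X] (J : Set ℝ) (F : ℝ → X) : Prop :=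
  ∃ u ξ : ℝ → X, UniformContinuousOn u J ∧ L1loc0 J ξ ∧ ∀ t ∈ J, F t = u t + ξ t

/-- Bohr almost periodic function on `ℝ`. -/
def IsAlmostPeriodic {X : Type*} [NormedAddCommGroup X] (a : ℝ → X) : Prop :=
  Continuous a ∧ (∃ C, ∀ t, ‖a t‖ ≤ C) ∧
    ∀ ε > 0, ∃ L > 0, ∀ x : ℝ, ∃ τ ∈ Set.Icc x (x + L),
      ∀ t : ℝ, ‖a (t + τ) - a t‖ ≤ ε

/-- Asymptotically almost periodic on `J`: `u = a|J + c`
with `a` almost periodic and `c ∈ C₀(J, X)`. -/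
def AAPOn {X : Type*} [NormedAddCommGroup X] (J : Set ℝ) (u : ℝ → X) : Prop :=
  ∃ a c : ℝ → X, IsAlmostPeriodic a ∧ c ∈ C0 (X := X) J ∧ ∀ t ∈ J, u t = a t + c t

/-- Mollifier `M_h F (t) = (1/h) ∫₀^h F (t+s) ds`. -/
def mollify {X : Type*} [NormedAddCommGroup X] [NormedSpace ℂ X]
    (h : ℝ) (F : ℝ → X) (t : ℝ) : X :=
  (1 / h) • ∫ s in (0:ℝ)..h, F (t + s)

/-- The functions `f_λ` (for `Re λ > 0` supported on `[0,∞)`, for `Re λ < 0` on `(-∞,0)`). -/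
def flam (l : ℂ) (t : ℝ) : ℂ :=
  if 0 < l.re then (if 0 ≤ t then Complex.exp (-(l * (t : ℂ))) else 0)
  else (if t < 0 then -Complex.exp (-(l * (t : ℂ))) else 0)

/-- Carleman transform of `F`, defined off the imaginary axis. -/
def carleman {X : Type*} [NormedAddCommGroup X] [NormedSpace ℂ X] (F : ℝ → X) (z : ℂ) : X :=
  if 0 < z.re then ∫ t in Set.Ioi (0:ℝ), Complex.exp (-(z * (t : ℂ))) • F t
  else -∫ t in Set.Ioi (0:ℝ), Complex.exp (z * (t : ℂ)) • F (-t)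

/-- `iω` is a regular point of the Carleman transform of `F`. -/
def CarlemanRegularAt {X : Type*} [NormedAddCommGroup X] [NormedSpace ℂ X]
    (F : ℝ → X) (ω : ℝ) : Prop :=
  ∃ V : Set ℂ, IsOpen V ∧ (Complex.I * (ω : ℂ)) ∈ V ∧
    ∃ g : ℂ → X, DifferentiableOn ℂ g (V ∪ {z : ℂ | z.re ≠ 0}) ∧
      ∀ z : ℂ, z.re ≠ 0 → g z = carleman F z

/-- Carleman spectrum of `F`. -/
def spC {X : Type*} [NormedAddCommGroup X] [NormedSpace ℂ X] (F : ℝ → X) : Set ℝ :=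
  {ω | ¬ CarlemanRegularAt F ω}

end

theorem key_indicator_mem {X : Type*} [NormedAddCommGroup X] [NormedSpace ℂ X]
    (A : Set (ℝ → X)) (hA : ClosedSubspaceLinf (Set.Ici (0:ℝ)) A)
    (hinv : BUCInvariant (Set.Ici (0:ℝ)) A)
    (ψ : ℝ → X) (hc : Continuous ψ) (R : ℝ) (hψ : ∀ t, R ≤ |t| → ψ t = 0) :
    (Set.Ici (0:ℝ)).indicator ψ ∈ A := by
  set R' : ℝ := max R 1 with hR'
  have hR1 : (1:ℝ) ≤ R' := le_max_right _ _
  have hψ' : ∀ t, R' ≤ |t| → ψ t = 0 := fun t ht => hψ t ((le_max_left R 1).trans ht)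
  set φ : ℝ → X := fun s => ψ (s + R') with hφ
  have hφc : Continuous φ := hc.comp (by continuity)
  have hφsupp : HasCompactSupport φ := by
    apply HasCompactSupport.intro (isCompact_Icc (a := -(2*R')) (b := 0))
    intro s hs
    simp only [Set.mem_Icc, not_and_or, not_le] at hs
    apply hψ'
    rcases hs with h | h
    · rw [_root_.abs_of_nonpos (by linarith)]; linarith
    · rw [_root_.abs_of_nonneg (by linarith)]; linarith
  have hev : ∀ᶠ s in cocompact ℝ, φ s = 0 := by
    rw [Filter.eventually_iff, mem_cocompact]
    exact ⟨tsupport φ, hφsupp, fun s hs => image_eq_zero_of_notMem_tsupport hs⟩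
  have hφuc : UniformContinuous φ :=
    hφc.uniformContinuous_of_tendsto_cocompact (x := 0)
      (tendsto_const_nhds.congr' (hev.mono fun s h => h.symm))
  have hφbd : ∃ C, ∀ s, ‖φ s‖ ≤ C := hφsupp.exists_bound_of_continuous hφc
  have h0 : (Set.Ici (0:ℝ)).indicator φ ∈ A := by
    have hz : (Set.Ici (0:ℝ)).indicator φ = (fun _ : ℝ => (0 : X)) := by
      funext t
      by_cases ht : t ∈ Set.Ici (0:ℝ)
      · rw [Set.indicator_of_mem ht]
        have ht0 : (0:ℝ) ≤ t := ht
        exact hψ' (t + R') (by rw [_root_.abs_of_nonneg (by linarith)]; linarith)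
      · exact Set.indicator_of_notMem ht _
    rw [hz]; exact hA.zero_mem
  have := hinv φ hφuc hφbd h0 (-R')
  have heq : (fun t => φ (t + -R')) = ψ := by
    funext t
    show ψ (t + -R' + R') = ψ t
    norm_num
  rwa [heq] at this

/-- a closed `BUC`-invariant subspace of `L^∞(ℝ₊, X)` contains `C₀(ℝ₊, X)`. -/
theorem stmt_4 {X : Type*} [NormedAddCommGroup X] [NormedSpace ℂ X] [CompleteSpace X]
    (A : Set (ℝ → X)) (hA : ClosedSubspaceLinf (Set.Ici (0:ℝ)) A)
    (hinv : BUCInvariant (Set.Ici (0:ℝ)) A) :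
    C0 (X := X) (Set.Ici (0:ℝ)) ⊆ A := by
  intro u hu
  obtain ⟨hcont, hzero, htend⟩ := hu
  have hu_ind : u = (Set.Ici (0:ℝ)).indicator u := by
    funext t
    by_cases ht : t ∈ Set.Ici (0:ℝ)
    · rw [Set.indicator_of_mem ht]
    · rw [Set.indicator_of_notMem ht, hzero t ht]
  have hmeas : AEStronglyMeasurable u volume := by
    rw [hu_ind]
    exact (aestronglyMeasurable_indicator_iff measurableSet_Ici).mpr
      (hcont.aestronglyMeasurable measurableSet_Ici)
  have hbd : ∃ C, ∀ t, ‖u t‖ ≤ C := by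
    have h1 : ∀ᶠ t in cocompact ℝ, ‖u t‖ ≤ 1 := by
      have h := htend.norm
      simp only [norm_zero] at h
      exact h.eventually (eventually_le_nhds (by norm_num : (0:ℝ) < 1))
    rw [Filter.eventually_iff, mem_cocompact] at h1
    obtain ⟨K, hK, hK1⟩ := h1
    obtain ⟨M, hM⟩ := hK.isBounded.subset_closedBall 0
    obtain ⟨C, hC⟩ := (isCompact_Icc (a := (0:ℝ)) (b := max M 0)).exists_bound_of_continuousOn
      (hcont.mono (fun x hx => hx.1))
    refine ⟨max C 1, fun t => ?_⟩
    by_cases ht0 : (0:ℝ) ≤ t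
    · by_cases htK : t ∈ K
      · have hmem := hM htK
        rw [Metric.mem_closedBall, Real.dist_eq, sub_zero, _root_.abs_of_nonneg ht0] at hmem
        exact le_max_of_le_left (hC t ⟨ht0, le_max_of_le_left hmem⟩)
      · exact le_max_of_le_right (hK1 htK)
    · rw [hzero t (by simpa using ht0)]
      simp
  refine hA.closed u ⟨hmeas, hbd, hzero⟩ ?_
  intro ε hε
  have hsm : ∀ᶠ t in cocompact ℝ, ‖u t‖ ≤ ε := by
    have h := htend.norm
    simp only [norm_zero] at h
    exact h.eventually (eventually_le_nhds hε)
  rw [Filter.eventually_iff, mem_cocompact] at hsm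
  obtain ⟨K, hK, hKε⟩ := hsm
  obtain ⟨M, hM⟩ := hK.isBounded.subset_closedBall 0
  set R : ℝ := max M 0 + 1 with hR
  have hR0 : (0:ℝ) ≤ R := by rw [hR]; positivity
  have hRu : ∀ t, R ≤ t → ‖u t‖ ≤ ε := by
    intro t ht
    apply hKε
    intro htK
    have hmem := hM htK
    rw [Metric.mem_closedBall, Real.dist_eq, sub_zero] at hmem
    have h1 : t ≤ max M 0 := le_max_of_le_left ((le_abs_self t).trans hmem)
    linarith
  set χ : ℝ → ℝ := fun t => max 0 (min 1 (R + 1 - t)) * max 0 (min 1 (t + 1)) with hχ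
  have hχ01 : ∀ t, 0 ≤ χ t ∧ χ t ≤ 1 := by
    intro t
    refine ⟨mul_nonneg (le_max_left _ _) (le_max_left _ _), ?_⟩
    calc max 0 (min 1 (R + 1 - t)) * max 0 (min 1 (t + 1)) ≤ 1 * 1 :=
          mul_le_mul (max_le zero_le_one (min_le_left _ _))
            (max_le zero_le_one (min_le_left _ _)) (le_max_left _ _) zero_le_one
      _ = 1 := one_mul 1
  have hχ1 : ∀ t, 0 ≤ t → t ≤ R → χ t = 1 := by
    intro t h0 h1
    have e1 : min 1 (R + 1 - t) = 1 := min_eq_left (by linarith)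
    have e2 : min 1 (t + 1) = 1 := min_eq_left (by linarith)
    rw [hχ]
    simp only [e1, e2]
    norm_num
  have hχcont : Continuous χ := by
    refine Continuous.mul ?_ ?_
    · exact continuous_const.max (continuous_const.min (continuous_const.sub continuous_id))
    · exact continuous_const.max (continuous_const.min (continuous_id.add continuous_const))
  set ψ : ℝ → X := fun t => ((χ t : ℝ) : ℂ) • u (max t 0) with hψ
  have hψcont : Continuous ψ := by
    apply Continuous.smul
    · exact Complex.continuous_ofReal.comp hχcont
    · exact hcont.comp_continuous (continuous_max.comp
        (continuous_id.prodMk continuous_const)) (fun x => Set.mem_Ici.mpr (le_max_right _ _))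
  have hψ0 : ∀ t, R + 2 ≤ |t| → ψ t = 0 := by
    intro t ht
    have hχ0 : χ t = 0 := by
      rcases le_or_gt 0 t with h | h
      · rw [_root_.abs_of_nonneg h] at ht
        have e1 : max 0 (min 1 (R + 1 - t)) = 0 :=
          max_eq_left ((min_le_right _ _).trans (by linarith))
        rw [hχ]
        simp only [e1, zero_mul]
      · rw [_root_.abs_of_neg h] at ht
        have e2 : max 0 (min 1 (t + 1)) = 0 :=
          max_eq_left ((min_le_right _ _).trans (by linarith))
        rw [hχ]
        simp only [e2, mul_zero]
    rw [hψ]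
    simp only [hχ0]
    norm_num
  refine ⟨(Set.Ici (0:ℝ)).indicator ψ,
    key_indicator_mem A hA hinv ψ hψcont (R + 2) hψ0, ?_⟩
  intro t
  by_cases ht : t ∈ Set.Ici (0:ℝ)
  · have ht0 : (0:ℝ) ≤ t := ht
    have hmax : max t 0 = t := max_eq_left ht0
    rw [Set.indicator_of_mem ht]
    rcases le_or_gt t R with h | h
    · rw [hψ]
      simp only [hmax, hχ1 t ht0 h]
      norm_num
      exact hε.le
    · have h1 : ‖u t‖ ≤ ε := hRu t h.le
      have heq : u t - ψ t = (((1 - χ t : ℝ)) : ℂ) • u t := by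
        rw [hψ]
        simp only [hmax]
        push_cast
        rw [sub_smul, one_smul]
      rw [heq, norm_smul]
      have hc1 : ‖(((1 - χ t : ℝ)) : ℂ)‖ ≤ 1 := by
        rw [Complex.norm_real, Real.norm_eq_abs, abs_le]
        constructor <;> [linarith [(hχ01 t).2]; linarith [(hχ01 t).1]]
      calc ‖(((1 - χ t : ℝ)) : ℂ)‖ * ‖u t‖ ≤ 1 * ε :=
            mul_le_mul hc1 h1 (norm_nonneg _) zero_le_one
        _ = ε := one_mul ε
  · rw [Set.indicator_of_notMem ht, hzero t ht]
    simp [hε.le]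
end

section
/- For λ ∈ ℂ with Re λ > 0 define f_λ(t) = e^{−λt} for t ≥ 0 and f_λ(t) = 0 for t < 0; for λ ∈ ℂ with Re λ < 0 define f_λ(t) = −e^{−λt} for t < 0 and f_λ(t) = 0 for t ≥ 0. Then the linear span of the set {f_λ : λ ∈ ℂ, Re λ ≠ 0} is dense in L¹(ℝ,ℂ). -/
open MeasureTheory Filter Topology Complex Set

lemma flam_measurable (l : ℂ) : Measurable (flam l) := by
  unfold flam
  split_ifs with h
  · exact Measurable.ite measurableSet_Ici
      (Complex.measurable_exp.comp (by fun_prop)) measurable_const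
  · exact Measurable.ite measurableSet_Iio
      ((Complex.measurable_exp.comp (by fun_prop)).neg) measurable_const

lemma cx_weierstrass (h : ℝ → ℂ) (hc : ContinuousOn h (Icc 0 1)) {ε : ℝ} (hε : 0 < ε) :
    ∃ (N : ℕ) (a : ℕ → ℂ), ∀ x ∈ Icc (0:ℝ) 1,
      ‖h x - ∑ j ∈ Finset.range N, a j * (x:ℂ)^j‖ ≤ ε := by
  obtain ⟨p, hp⟩ := exists_polynomial_near_of_continuousOn 0 1 (fun x => (h x).re)
    (Complex.continuous_re.comp_continuousOn hc) (ε/2) (by positivity)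
  obtain ⟨q, hq⟩ := exists_polynomial_near_of_continuousOn 0 1 (fun x => (h x).im)
    (Complex.continuous_im.comp_continuousOn hc) (ε/2) (by positivity)
  set N := max (p.natDegree + 1) (q.natDegree + 1) with hN
  refine ⟨N, fun j => ((p.coeff j : ℂ) + (q.coeff j : ℂ) * Complex.I), fun x hx => ?_⟩
  have hsum : ∑ j ∈ Finset.range N, ((p.coeff j : ℂ) + (q.coeff j : ℂ) * Complex.I) * (x:ℂ)^j
      = ((p.eval x : ℝ) : ℂ) + ((q.eval x : ℝ) : ℂ) * Complex.I := by
    rw [Polynomial.eval_eq_sum_range' (lt_of_lt_of_le (Nat.lt_succ_self _) (le_max_left _ _)),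
        Polynomial.eval_eq_sum_range' (lt_of_lt_of_le (Nat.lt_succ_self _) (le_max_right _ _))]
    push_cast
    rw [Finset.sum_mul, ← Finset.sum_add_distrib]
    refine Finset.sum_congr rfl fun j _ => by ring
  rw [hsum]
  have key : h x - (((p.eval x : ℝ) : ℂ) + ((q.eval x : ℝ) : ℂ) * Complex.I)
      = (((h x).re - p.eval x : ℝ) : ℂ) + (((h x).im - q.eval x : ℝ) : ℂ) * Complex.I := by
    conv_lhs => rw [← Complex.re_add_im (h x)]
    push_cast
    ring
  rw [key]
  have h1 := hp x hx
  have h2 := hq x hx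
  calc ‖(((h x).re - p.eval x : ℝ) : ℂ) + (((h x).im - q.eval x : ℝ) : ℂ) * Complex.I‖
      ≤ ‖(((h x).re - p.eval x : ℝ) : ℂ)‖ + ‖(((h x).im - q.eval x : ℝ) : ℂ) * Complex.I‖ :=
        norm_add_le _ _
    _ = |(h x).re - p.eval x| + |(h x).im - q.eval x| := by
        rw [norm_mul, Complex.norm_I, mul_one, Complex.norm_real, Complex.norm_real, Real.norm_eq_abs, Real.norm_eq_abs]
    _ ≤ ε := by
        rw [abs_sub_comm ((h x).re) _, abs_sub_comm ((h x).im) _]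
        linarith

lemma corePos (f : ℝ → ℂ) (hf : Continuous f) (R : ℝ) (hR : ∀ t, R ≤ t → f t = 0)
    {ε : ℝ} (hε : 0 < ε) :
    ∃ (N : ℕ) (a : ℕ → ℂ), ∀ t : ℝ, 0 ≤ t →
      ‖f t - ∑ j ∈ Finset.range N, a j * ((Real.exp (-t) : ℝ) : ℂ)^(j+1)‖
        ≤ ε * Real.exp (-t) := by
  set h : ℝ → ℂ := fun x => if 0 < x then f (-Real.log x) * (x:ℂ)⁻¹ else 0 with hh
  have hcont : Continuous h := by
    rw [continuous_iff_continuousAt]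
    intro x
    rcases lt_or_ge 0 x with hx | hx
    · have hev : ∀ᶠ y in 𝓝 x, h y = f (-Real.log y) * (y:ℂ)⁻¹ := by
        filter_upwards [Ioi_mem_nhds hx] with y hy
        simp only [hh, if_pos (mem_Ioi.mp hy)]
      have hF : ContinuousAt (fun y : ℝ => f (-Real.log y) * (y:ℂ)⁻¹) x := by
        apply ContinuousAt.mul
        · exact hf.continuousAt.comp (Real.continuousAt_log hx.ne').neg
        · exact Complex.continuous_ofReal.continuousAt.inv₀ (by exact_mod_cast hx.ne')
      exact hF.congr (Filter.EventuallyEq.symm hev)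
    · set c := Real.exp (-(max R 0 + 1)) with hc
      have hc0 : 0 < c := Real.exp_pos _
      have hzero : ∀ y < c, h y = 0 := by
        intro y hy
        rcases lt_or_ge 0 y with hy0 | hy0
        · have hlog : Real.log y < -(max R 0 + 1) := by
            calc Real.log y < Real.log c := Real.log_lt_log hy0 hy
              _ = -(max R 0 + 1) := Real.log_exp _
          have : R ≤ -Real.log y := by
            have := le_max_left R 0
            linarith
          simp only [hh, if_pos hy0, hR _ this, zero_mul]
        · simp only [hh, if_neg (not_lt.mpr hy0)]
      have hev : ∀ᶠ y in 𝓝 x, h y = 0 := by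
        filter_upwards [Iio_mem_nhds (lt_of_le_of_lt hx hc0)] with y hy
        exact hzero y hy
      exact continuousAt_const.congr (Filter.EventuallyEq.symm hev)
  obtain ⟨N, a, hNa⟩ := cx_weierstrass h hcont.continuousOn hε
  refine ⟨N, a, fun t ht => ?_⟩
  set x := Real.exp (-t) with hxdef
  have hx0 : 0 < x := Real.exp_pos _
  have hx1 : x ≤ 1 := (Real.exp_le_exp.mpr (neg_nonpos.mpr ht)).trans_eq Real.exp_zero
  have hhx : h x = f t * (x:ℂ)⁻¹ := by
    simp only [hh, if_pos hx0, hxdef, Real.log_exp, neg_neg, Real.exp_pos, ↓reduceIte]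
  have hxC : (x:ℂ) ≠ 0 := by exact_mod_cast hx0.ne'
  have hft : (x:ℂ) * h x = f t := by
    rw [hhx]; field_simp
  have hmul : (x:ℂ) * ∑ j ∈ Finset.range N, a j * (x:ℂ)^j
      = ∑ j ∈ Finset.range N, a j * (x:ℂ)^(j+1) := by
    rw [Finset.mul_sum]
    exact Finset.sum_congr rfl fun j _ => by ring
  have hdiff : f t - ∑ j ∈ Finset.range N, a j * (x:ℂ)^(j+1)
      = (x:ℂ) * (h x - ∑ j ∈ Finset.range N, a j * (x:ℂ)^j) := by
    rw [mul_sub, hmul, hft]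
  rw [hdiff, norm_mul, Complex.norm_real, Real.norm_eq_abs, abs_of_pos hx0, mul_comm]
  exact mul_le_mul_of_nonneg_right (hNa x ⟨hx0.le, hx1⟩) hx0.le

lemma flam_pos_pos (j : ℕ) {t : ℝ} (ht : 0 ≤ t) :
    flam ((j:ℂ)+1) t = ((Real.exp (-t) : ℝ) : ℂ)^(j+1) := by
  have hre : (0:ℝ) < ((j:ℂ)+1).re := by
    simp only [Complex.add_re, Complex.natCast_re, Complex.one_re]
    positivity
  rw [flam, if_pos hre, if_pos ht]
  have h1 : (-(((j:ℂ)+1) * (t:ℂ))) = ((j+1 : ℕ):ℂ) * ((-t : ℝ):ℂ) := by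
    push_cast; ring
  rw [h1, Complex.exp_nat_mul, ← Complex.ofReal_exp]

lemma flam_pos_neg (j : ℕ) {t : ℝ} (ht : t < 0) : flam ((j:ℂ)+1) t = 0 := by
  have hre : (0:ℝ) < ((j:ℂ)+1).re := by
    simp only [Complex.add_re, Complex.natCast_re, Complex.one_re]
    positivity
  rw [flam, if_pos hre, if_neg (not_le.mpr ht)]

lemma flam_neg_neg (j : ℕ) {t : ℝ} (ht : t < 0) :
    flam (-((j:ℂ)+1)) t = -((Real.exp t : ℝ) : ℂ)^(j+1) := by
  have hre : ¬ (0:ℝ) < (-((j:ℂ)+1)).re := by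
    simp only [Complex.neg_re, Complex.add_re, Complex.natCast_re, Complex.one_re]
    push_neg
    have : (0:ℝ) ≤ (j:ℝ) := Nat.cast_nonneg j
    linarith
  rw [flam, if_neg hre, if_pos ht]
  have h1 : (-((-((j:ℂ)+1)) * (t:ℂ))) = ((j+1 : ℕ):ℂ) * ((t : ℝ):ℂ) := by
    push_cast; ring
  rw [h1, Complex.exp_nat_mul, ← Complex.ofReal_exp]

lemma flam_neg_pos (j : ℕ) {t : ℝ} (ht : 0 ≤ t) : flam (-((j:ℂ)+1)) t = 0 := by
  have hre : ¬ (0:ℝ) < (-((j:ℂ)+1)).re := by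
    simp only [Complex.neg_re, Complex.add_re, Complex.natCast_re, Complex.one_re]
    push_neg
    have : (0:ℝ) ≤ (j:ℝ) := Nat.cast_nonneg j
    linarith
  rw [flam, if_neg hre, if_neg (not_lt.mpr ht)]

lemma keyPos (f : ℝ → ℂ) (hf : Continuous f) (R : ℝ) (hR : ∀ t, R ≤ t → f t = 0)
    {ε : ℝ} (hε : 0 < ε) :
    ∃ g : ℝ → ℂ, g ∈ Submodule.span ℂ {g : ℝ → ℂ | ∃ l : ℂ, l.re ≠ 0 ∧ g = flam l} ∧
      Measurable g ∧ (∀ t, 0 ≤ t → ‖f t - g t‖ ≤ ε * Real.exp (-t)) ∧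
      (∀ t, t < 0 → g t = 0) := by
  obtain ⟨N, a, hNa⟩ := corePos f hf R hR hε
  refine ⟨fun t => ∑ j ∈ Finset.range N, a j * flam ((j:ℂ)+1) t, ?_, ?_, ?_, ?_⟩
  · have hgeq : (fun t => ∑ j ∈ Finset.range N, a j * flam ((j:ℂ)+1) t)
        = ∑ j ∈ Finset.range N, a j • flam ((j:ℂ)+1) := by
      ext t; simp [Finset.sum_apply]
    rw [hgeq]
    refine Submodule.sum_mem _ fun j _ => Submodule.smul_mem _ _ (Submodule.subset_span ?_)
    refine ⟨(j:ℂ)+1, ?_, rfl⟩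
    simp only [Complex.add_re, Complex.natCast_re, Complex.one_re]
    positivity
  · exact Finset.measurable_sum _ fun j _ => (flam_measurable _).const_mul (a j)
  · intro t ht
    have := hNa t ht
    simp only [flam_pos_pos _ ht]
    exact this
  · intro t ht
    simp [flam_pos_neg _ ht]

lemma keyNeg (f : ℝ → ℂ) (hf : Continuous f) (R : ℝ) (hR : ∀ t, t ≤ -R → f t = 0)
    {ε : ℝ} (hε : 0 < ε) :
    ∃ g : ℝ → ℂ, g ∈ Submodule.span ℂ {g : ℝ → ℂ | ∃ l : ℂ, l.re ≠ 0 ∧ g = flam l} ∧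
      Measurable g ∧ (∀ t, t < 0 → ‖f t - g t‖ ≤ ε * Real.exp t) ∧
      (∀ t, 0 ≤ t → g t = 0) := by
  obtain ⟨N, a, hNa⟩ := corePos (fun t => f (-t)) (hf.comp continuous_neg) R
    (fun t ht => hR (-t) (by linarith)) hε
  refine ⟨fun t => ∑ j ∈ Finset.range N, (-(a j)) * flam (-((j:ℂ)+1)) t, ?_, ?_, ?_, ?_⟩
  · have hgeq : (fun t => ∑ j ∈ Finset.range N, (-(a j)) * flam (-((j:ℂ)+1)) t)
        = ∑ j ∈ Finset.range N, (-(a j)) • flam (-((j:ℂ)+1)) := by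
      ext t; simp [Finset.sum_apply]
    rw [hgeq]
    refine Submodule.sum_mem _ fun j _ => Submodule.smul_mem _ _ (Submodule.subset_span ?_)
    refine ⟨-((j:ℂ)+1), ?_, rfl⟩
    simp only [Complex.neg_re, Complex.add_re, Complex.natCast_re, Complex.one_re]
    intro hcon
    have : (j:ℝ) + 1 = 0 := by linarith
    have : (0:ℝ) < (j:ℝ) + 1 := by positivity
    linarith
  · exact Finset.measurable_sum _ fun j _ => (flam_measurable _).const_mul (-(a j))
  · intro t ht
    have h2 := hNa (-t) (by linarith)
    simp only [neg_neg] at h2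
    have h3 : ∑ j ∈ Finset.range N, (-(a j)) * flam (-((j:ℂ)+1)) t
        = ∑ j ∈ Finset.range N, a j * ((Real.exp t : ℝ) : ℂ)^(j+1) := by
      refine Finset.sum_congr rfl fun j _ => ?_
      rw [flam_neg_neg _ ht]; ring
    beta_reduce
    rw [h3]
    exact h2
  · intro t ht
    beta_reduce
    exact Finset.sum_eq_zero fun j _ => by rw [flam_neg_pos _ ht, mul_zero]

lemma exp_neg_abs_integrable : Integrable (fun t : ℝ => Real.exp (-|t|)) volume := by
  rw [← integrableOn_univ, ← Iio_union_Ici (a := (0:ℝ))]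
  apply IntegrableOn.union
  · refine IntegrableOn.congr_fun ((integrableOn_exp_Iic 0).mono_set Iio_subset_Iic_self)
      (fun t ht => ?_) measurableSet_Iio
    rw [abs_of_neg (mem_Iio.mp ht), neg_neg]
  · refine IntegrableOn.congr_fun
      (Iff.mpr integrableOn_Ici_iff_integrableOn_Ioi (exp_neg_integrableOn_Ioi 0 one_pos))
      (fun t ht => ?_) measurableSet_Ici
    rw [neg_one_mul, _root_.abs_of_nonneg (mem_Ici.mp ht)]

lemma exp_neg_abs_integral : ∫ t : ℝ, Real.exp (-|t|) = 2 := by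
  have hdisj : Disjoint (Iio (0:ℝ)) (Ici 0) := Iio_disjoint_Ici le_rfl
  rw [← setIntegral_univ, ← Iio_union_Ici (a := (0:ℝ)),
    setIntegral_union hdisj measurableSet_Ici
      (exp_neg_abs_integrable.integrableOn) (exp_neg_abs_integrable.integrableOn)]
  have h1 : ∫ t in Iio (0:ℝ), Real.exp (-|t|) = 1 := by
    rw [setIntegral_congr_fun measurableSet_Iio
      (fun t ht => by rw [abs_of_neg (mem_Iio.mp ht), neg_neg] : EqOn _ Real.exp _)]
    rw [← integral_Iic_eq_integral_Iio]
    exact integral_exp_Iic_zero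
  have h2 : ∫ t in Ici (0:ℝ), Real.exp (-|t|) = 1 := by
    rw [setIntegral_congr_fun measurableSet_Ici
      (fun t ht => by rw [_root_.abs_of_nonneg (mem_Ici.mp ht)] : EqOn _ (fun t => Real.exp (-t)) _)]
    rw [integral_Ici_eq_integral_Ioi]
    exact integral_exp_neg_Ioi_zero
  rw [h1, h2]; norm_num

/-- the span of the functions `f_λ` (`Re λ ≠ 0`) is dense in `L¹(ℝ, ℂ)`. -/
theorem stmt_6 :
    ∀ f : ℝ → ℂ, MeasureTheory.Integrable f MeasureTheory.volume → ∀ ε > (0:ℝ),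
      ∃ g ∈ Submodule.span ℂ {g : ℝ → ℂ | ∃ l : ℂ, l.re ≠ 0 ∧ g = flam l},
        ∫ t : ℝ, ‖f t - g t‖ < ε := by
  intro f hf ε hε
  obtain ⟨f₀, hf₀supp, hf₀close, hf₀cont, hf₀int⟩ :=
    hf.exists_hasCompactSupport_integral_sub_le (show (0:ℝ) < ε/4 by positivity)
  obtain ⟨R, hRpos, hRzero⟩ := hf₀supp.exists_pos_le_norm
  have hε8 : (0:ℝ) < ε/8 := by positivity
  obtain ⟨g₁, hg₁span, hg₁meas, hg₁bound, hg₁zero⟩ := keyPos f₀ hf₀cont R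
    (fun t ht => hRzero t (by rw [Real.norm_eq_abs]; exact ht.trans (le_abs_self t))) hε8
  obtain ⟨g₂, hg₂span, hg₂meas, hg₂bound, hg₂zero⟩ := keyNeg f₀ hf₀cont R
    (fun t ht => hRzero t (by rw [Real.norm_eq_abs, abs_of_nonpos (by linarith)]; linarith)) hε8
  refine ⟨g₁ + g₂, Submodule.add_mem _ hg₁span hg₂span, ?_⟩
  set g : ℝ → ℂ := g₁ + g₂ with hg
  have hpt : ∀ t, ‖f₀ t - g t‖ ≤ (ε/8) * Real.exp (-|t|) := by
    intro t
    rcases le_or_gt 0 t with ht | ht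
    · have : g t = g₁ t := by simp [hg, hg₂zero t ht]
      rw [this, _root_.abs_of_nonneg ht]
      exact hg₁bound t ht
    · have : g t = g₂ t := by simp [hg, hg₁zero t ht]
      rw [this, abs_of_neg ht, neg_neg]
      exact hg₂bound t ht
  have hgmeas : Measurable g := hg₁meas.add hg₂meas
  have hBint : Integrable (fun t : ℝ => (ε/8) * Real.exp (-|t|)) volume :=
    exp_neg_abs_integrable.const_mul _
  have h1 : Integrable (fun t => ‖f₀ t - g t‖) volume := by
    refine Integrable.mono' hBint
      ((hf₀int.aestronglyMeasurable.sub hgmeas.aestronglyMeasurable).norm)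
      (Filter.Eventually.of_forall fun t => ?_)
    rw [norm_norm]
    exact hpt t
  have h2 : Integrable (fun t => ‖f t - f₀ t‖) volume := (hf.sub hf₀int).norm
  have h3 : Integrable (fun t => ‖f t - g t‖) volume := by
    refine Integrable.mono' (h2.add h1)
      ((hf.aestronglyMeasurable.sub hgmeas.aestronglyMeasurable).norm)
      (Filter.Eventually.of_forall fun t => ?_)
    rw [norm_norm]
    calc ‖f t - g t‖ ≤ ‖f t - f₀ t‖ + ‖f₀ t - g t‖ := by
          have : f t - g t = (f t - f₀ t) + (f₀ t - g t) := by ring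
          rw [this]; exact norm_add_le _ _
      _ = (fun t => ‖f t - f₀ t‖ + ‖f₀ t - g t‖) t := rfl
  have hBval : ∫ t : ℝ, (ε/8) * Real.exp (-|t|) = ε/4 := by
    rw [integral_const_mul, exp_neg_abs_integral]; ring
  have step1 : ∫ t : ℝ, ‖f t - g t‖ ≤ ∫ t : ℝ, (‖f t - f₀ t‖ + ‖f₀ t - g t‖) := by
    refine integral_mono h3 (h2.add h1) fun t => ?_
    have : f t - g t = (f t - f₀ t) + (f₀ t - g t) := by ring
    rw [this]; exact norm_add_le _ _
  have step2 : ∫ t : ℝ, (‖f t - f₀ t‖ + ‖f₀ t - g t‖)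
      = (∫ t : ℝ, ‖f t - f₀ t‖) + ∫ t : ℝ, ‖f₀ t - g t‖ := integral_add h2 h1
  have step3 : ∫ t : ℝ, ‖f₀ t - g t‖ ≤ ε/4 := by
    rw [← hBval]
    exact integral_mono h1 hBint hpt
  have : ∫ t : ℝ, ‖f t - g t‖ ≤ ε/4 + ε/4 := by
    rw [step2] at step1
    exact step1.trans (add_le_add hf₀close step3)
  linarith
end

section
/- Let X be a complex Banach space. (a) If F ∈ L∞(ℝ,X) and 0 ∉ sp_{0,S}(F), then F is ergodic with mean 0. (b) If F ∈ SO(ℝ,X) and 0 ∉ sp_{0,S}(F), then F = u + ξ where u is bounded uniformly continuous and ergodic with mean 0 and ξ ∈ L¹_{loc,0}(ℝ,X); in particular F is ergodic with mean 0. -/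
open MeasureTheory Filter Topology Complex Set

noncomputable section

set_option maxHeartbeats 1000000

noncomputable section AuxProofs

open MeasureTheory

variable {X : Type*} [NormedAddCommGroup X] [NormedSpace ℂ X] [CompleteSpace X]

/-- `ft φ 0` is the plain integral. -/
lemma ft_zero_eq (φ : ℝ → ℂ) : ft φ 0 = ∫ s, φ s := by
  unfold ft
  simp

lemma bdd_intervalIntegrable {H : ℝ → X} {C : ℝ} (hm : AEStronglyMeasurable H volume)
    (hC : ∀ x, ‖H x‖ ≤ C) (a b : ℝ) : IntervalIntegrable H volume a b := by
  exact (_root_.intervalIntegrable_const (c := C)).mono_fun hm.restrict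
    (Filter.Eventually.of_forall fun x => (hC x).trans (le_abs_self C))

lemma avg_shift_bound {H : ℝ → X} {C : ℝ} (hm : AEStronglyMeasurable H volume)
    (hC : ∀ x, ‖H x‖ ≤ C) (t s T : ℝ) :
    ‖(∫ r in (0:ℝ)..T, H (t + r)) - ∫ r in (0:ℝ)..T, H (t - s + r)‖ ≤ 2 * C * |s| := by
  have hii : ∀ a b : ℝ, IntervalIntegrable H volume a b := bdd_intervalIntegrable hm hC
  have h1 : (∫ r in (0:ℝ)..T, H (t + r)) = ∫ x in t..(t + T), H x := by
    simpa using intervalIntegral.integral_comp_add_left (a := (0:ℝ)) (b := T) (f := H) t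
  have h2 : (∫ r in (0:ℝ)..T, H (t - s + r)) = ∫ x in (t - s)..(t - s + T), H x := by
    simpa using intervalIntegral.integral_comp_add_left (a := (0:ℝ)) (b := T) H (t - s)
  rw [h1, h2]
  have e1 : (∫ x in (t - s)..t, H x) + (∫ x in t..(t + T), H x)
      = ∫ x in (t - s)..(t + T), H x :=
    intervalIntegral.integral_add_adjacent_intervals (hii _ _) (hii _ _)
  have e2 : (∫ x in (t - s)..(t - s + T), H x) + (∫ x in (t - s + T)..(t + T), H x)
      = ∫ x in (t - s)..(t + T), H x :=
    intervalIntegral.integral_add_adjacent_intervals (hii _ _) (hii _ _)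
  have key : (∫ x in t..(t + T), H x) - (∫ x in (t - s)..(t - s + T), H x)
      = (∫ x in (t - s + T)..(t + T), H x) - (∫ x in (t - s)..t, H x) := by
    have h3 := e1.trans e2.symm
    rw [sub_eq_sub_iff_add_eq_add, add_comm]
    rw [h3]
    abel
  rw [key]
  have b1 : ‖∫ x in (t - s + T)..(t + T), H x‖ ≤ C * |s| := by
    have := intervalIntegral.norm_integral_le_of_norm_le_const
      (a := t - s + T) (b := t + T) (C := C) (f := H) (fun x _ => hC x)
    have he : t + T - (t - s + T) = s := by ring
    rwa [he] at this
  have b2 : ‖∫ x in (t - s)..t, H x‖ ≤ C * |s| := by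
    have := intervalIntegral.norm_integral_le_of_norm_le_const
      (a := t - s) (b := t) (C := C) (f := H) (fun x _ => hC x)
    have he : t - (t - s) = s := by ring
    rwa [he] at this
  calc ‖(∫ x in (t - s + T)..(t + T), H x) - ∫ x in (t - s)..t, H x‖
      ≤ ‖∫ x in (t - s + T)..(t + T), H x‖ + ‖∫ x in (t - s)..t, H x‖ := norm_sub_le _ _
    _ ≤ C * |s| + C * |s| := add_le_add b1 b2
    _ = 2 * C * |s| := by ring


lemma loc_intervalIntegrable {ξ : ℝ → X} (hloc : LocallyIntegrable ξ volume) (a b : ℝ) :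
    IntervalIntegrable ξ volume a b :=
  (hloc.integrableOn_isCompact isCompact_uIcc).intervalIntegrable

lemma cocompact_bound {ξ : ℝ → X} (h0 : Filter.Tendsto ξ (cocompact ℝ) (nhds 0))
    {ε : ℝ} (hε : 0 < ε) : ∃ R : ℝ, 0 < R ∧ ∀ x : ℝ, R < |x| → ‖ξ x‖ ≤ ε := by
  have hev : ∀ᶠ x in cocompact ℝ, dist (ξ x) 0 < ε := Metric.tendsto_nhds.mp h0 ε hε
  rcases Filter.mem_cocompact.mp hev with ⟨K, hK, hsub⟩
  obtain ⟨R, hR⟩ := hK.isBounded.subset_closedBall 0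
  refine ⟨max R 1, by positivity, fun x hx => ?_⟩
  have hxK : x ∉ K := by
    intro hmem
    have := hR hmem
    rw [Metric.mem_closedBall, Real.dist_eq, sub_zero] at this
    have : |x| ≤ max R 1 := this.trans (le_max_left _ _)
    linarith
  have := hsub hxK
  simp only [Set.mem_setOf_eq, dist_zero_right] at this
  exact this.le

lemma window_bound {ξ : ℝ → X} (hloc : LocallyIntegrable ξ volume) {R ε : ℝ}
    (hR0 : 0 ≤ R) (hε : 0 ≤ ε) (hbd : ∀ x : ℝ, R < |x| → ‖ξ x‖ ≤ ε) (t T : ℝ) (hT : 0 ≤ T) :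
    ‖∫ r in (0:ℝ)..T, ξ (t + r)‖ ≤ (∫ x in Set.Icc (-R) R, ‖ξ x‖) + ε * T := by
  have h1 : (∫ r in (0:ℝ)..T, ξ (t + r)) = ∫ x in t..(t + T), ξ x := by
    simpa using intervalIntegral.integral_comp_add_left (a := (0:ℝ)) (b := T) (f := ξ) t
  rw [h1]
  have hle : t ≤ t + T := by linarith
  have hIoc : IntegrableOn (fun x => ‖ξ x‖) (Set.Ioc t (t + T)) volume := by
    have := (loc_intervalIntegrable hloc t (t + T)).norm
    exact this.1
  have hIcc : IntegrableOn (fun x => ‖ξ x‖) (Set.Icc (-R) R) volume :=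
    (hloc.integrableOn_isCompact isCompact_Icc).norm
  have step1 : ‖∫ x in t..(t + T), ξ x‖ ≤ ∫ x in Set.Ioc t (t + T), ‖ξ x‖ := by
    refine (intervalIntegral.norm_integral_le_integral_norm (f := ξ) (μ := volume)
      (a := t) (b := t + T) hle).trans_eq ?_
    exact intervalIntegral.integral_of_le hle
  have split : (∫ x in Set.Ioc t (t + T) ∩ Set.Icc (-R) R, ‖ξ x‖)
      + (∫ x in Set.Ioc t (t + T) \ Set.Icc (-R) R, ‖ξ x‖)
      = ∫ x in Set.Ioc t (t + T), ‖ξ x‖ :=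
    integral_inter_add_diff measurableSet_Icc hIoc
  have b1 : (∫ x in Set.Ioc t (t + T) ∩ Set.Icc (-R) R, ‖ξ x‖) ≤ ∫ x in Set.Icc (-R) R, ‖ξ x‖ := by
    apply setIntegral_mono_set hIcc
    · exact Filter.Eventually.of_forall fun x => norm_nonneg _
    · exact HasSubset.Subset.eventuallyLE Set.inter_subset_right
  have b2 : (∫ x in Set.Ioc t (t + T) \ Set.Icc (-R) R, ‖ξ x‖) ≤ ε * T := by
    have hs : MeasurableSet (Set.Ioc t (t + T) \ Set.Icc (-R) R) :=
      measurableSet_Ioc.diff measurableSet_Icc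
    have hbd' : ∀ x ∈ Set.Ioc t (t + T) \ Set.Icc (-R) R, ‖ξ x‖ ≤ ε := by
      intro x hx
      apply hbd
      rcases hx with ⟨-, hx2⟩
      simp only [Set.mem_Icc, not_and_or, not_le] at hx2
      rcases hx2 with h | h
      · rw [abs_of_neg (by linarith : x < 0)]; linarith
      · rw [abs_of_pos (by linarith : 0 < x)]; linarith
    calc (∫ x in Set.Ioc t (t + T) \ Set.Icc (-R) R, ‖ξ x‖)
        ≤ ∫ _x in Set.Ioc t (t + T) \ Set.Icc (-R) R, ε := by
          apply setIntegral_mono_on (hIoc.mono_set Set.diff_subset) ((integrableOn_const_iff (C := ε)).mpr ?_)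
            hs hbd'
          right
          exact lt_of_le_of_lt (measure_mono Set.diff_subset) (by simp [measure_Ioc_lt_top])
      _ = (volume (Set.Ioc t (t + T) \ Set.Icc (-R) R)).toReal * ε := by
          rw [setIntegral_const]; rfl
      _ ≤ ε * T := by
          have hm : volume (Set.Ioc t (t + T) \ Set.Icc (-R) R) ≤ ENNReal.ofReal T := by
            refine (measure_mono Set.diff_subset).trans ?_
            rw [Real.volume_Ioc]
            simp
          have := ENNReal.toReal_mono (by simp) hm
          rw [ENNReal.toReal_ofReal hT] at this
          nlinarith [ENNReal.toReal_nonneg (a := volume (Set.Ioc t (t + T) \ Set.Icc (-R) R))]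
  calc ‖∫ x in t..(t + T), ξ x‖ ≤ ∫ x in Set.Ioc t (t + T), ‖ξ x‖ := step1
    _ = _ + _ := split.symm
    _ ≤ (∫ x in Set.Icc (-R) R, ‖ξ x‖) + ε * T := add_le_add b1 b2

lemma ergodic_xi {ξ : ℝ → X} (hloc : LocallyIntegrable ξ volume)
    (h0 : Filter.Tendsto ξ (cocompact ℝ) (nhds 0)) : ErgodicMean Set.univ ξ 0 := by
  intro ε hε
  obtain ⟨R, hR0, hR⟩ := cocompact_bound h0 (half_pos hε)
  set I := ∫ x in Set.Icc (-R) R, ‖ξ x‖ with hI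
  have hI0 : 0 ≤ I := setIntegral_nonneg measurableSet_Icc fun x _ => norm_nonneg _
  refine ⟨2 * I / ε + 1, by positivity, fun T hT t _ => ?_⟩
  have hT0 : 0 < T := lt_of_lt_of_le (by positivity) hT
  have hw := window_bound hloc hR0.le (le_of_lt (half_pos hε)) hR t T hT0.le
  rw [sub_zero, norm_smul]
  have : ‖(1:ℝ) / T‖ = 1 / T := by
    rw [Real.norm_eq_abs, abs_of_pos (by positivity)]
  rw [this]
  rw [div_mul_eq_mul_div, div_le_iff₀ hT0, one_mul]
  calc ‖∫ s in (0:ℝ)..T, ξ (t + s)‖ ≤ I + ε / 2 * T := hw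
    _ ≤ ε * T := by
      have h2 : ε * (2 * I / ε) = 2 * I := by field_simp
      nlinarith [mul_le_mul_of_nonneg_left hT hε.le]


lemma qmp_aux (t T : ℝ) :
    Measure.QuasiMeasurePreserving (fun p : ℝ × ℝ => t + p.1 - p.2)
      ((volume.restrict (Set.Ioc 0 T)).prod volume) volume := by
  have h1 : Measure.QuasiMeasurePreserving (fun p : ℝ × ℝ => p.1 - p.2)
      (volume.prod (volume.restrict (Set.Ioc 0 T))) volume :=
    quasiMeasurePreserving_sub volume _
  have h2 := h1.comp
    (Measure.measurePreserving_swap (μ := volume.restrict (Set.Ioc 0 T))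
      (ν := volume)).quasiMeasurePreserving
  have h3 := ((Measure.measurePreserving_sub_left volume t).quasiMeasurePreserving).comp h2
  have he : (fun p : ℝ × ℝ => t + p.1 - p.2)
      = (fun x : ℝ => t - x) ∘ ((fun p : ℝ × ℝ => p.1 - p.2) ∘ Prod.swap) := by
    funext p
    simp only [Function.comp_apply, Prod.snd_swap, Prod.fst_swap]
    ring
  rw [he]
  exact h3

lemma prod_int {H : ℝ → X} (hm : AEStronglyMeasurable H volume) (φ : SchwartzMap ℝ ℂ) (t T : ℝ)
    (hloc : ∀ w : ℝ, Integrable (fun s => (φ s : ℂ) • H (w - s)) volume)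
    {Cμ : ℝ} (hCμ : ∀ w : ℝ, (∫ s : ℝ, ‖(φ s : ℂ) • H (w - s)‖) ≤ Cμ) :
    Integrable (fun p : ℝ × ℝ => (φ p.2 : ℂ) • H (t + p.1 - p.2))
      ((volume.restrict (Set.Ioc 0 T)).prod volume) := by
  haveI : IsFiniteMeasure (volume.restrict (Set.Ioc (0:ℝ) T)) := by
    constructor
    rw [Measure.restrict_apply_univ]
    exact measure_Ioc_lt_top
  have haeH : AEStronglyMeasurable (fun p : ℝ × ℝ => H (t + p.1 - p.2))
      ((volume.restrict (Set.Ioc 0 T)).prod volume) :=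
    hm.comp_quasiMeasurePreserving (qmp_aux t T)
  have haeφ : AEStronglyMeasurable (fun p : ℝ × ℝ => (φ p.2 : ℂ))
      ((volume.restrict (Set.Ioc 0 T)).prod volume) :=
    (φ.continuous.comp continuous_snd).aestronglyMeasurable
  have hae := haeφ.smul haeH
  refine (integrable_prod_iff hae).mpr ⟨Filter.Eventually.of_forall fun r => ?_, ?_⟩
  · exact hloc (t + r)
  · refine Integrable.mono' (integrable_const Cμ)
      (hae.norm.integral_prod_right') (Filter.Eventually.of_forall fun r => ?_)
    rw [Real.norm_eq_abs, _root_.abs_of_nonneg (integral_nonneg fun s => norm_nonneg _)]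
    simpa using hCμ (t + r)

lemma fubini_conv {H : ℝ → X} (φ : SchwartzMap ℝ ℂ) {t T : ℝ} (hT : 0 ≤ T)
    (hprod : Integrable (fun p : ℝ × ℝ => (φ p.2 : ℂ) • H (t + p.1 - p.2))
      ((volume.restrict (Set.Ioc 0 T)).prod volume)) :
    (∫ r in (0:ℝ)..T, convol H (fun a => (φ a : ℂ)) (t + r))
      = ∫ s : ℝ, (φ s : ℂ) • (∫ r in (0:ℝ)..T, H (t - s + r)) := by
  have hswap := MeasureTheory.integral_integral_swap
    (f := fun r s => (φ s : ℂ) • H (t + r - s))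
    (μ := volume.restrict (Set.Ioc 0 T)) (ν := volume) hprod
  rw [intervalIntegral.integral_of_le hT]
  have hL : (∫ r in Set.Ioc (0:ℝ) T, convol H (fun a => (φ a : ℂ)) (t + r))
      = ∫ r in Set.Ioc (0:ℝ) T, ∫ s : ℝ, (φ s : ℂ) • H (t + r - s) := by
    rfl
  rw [hL, hswap]
  apply integral_congr_ae
  filter_upwards with s
  rw [MeasureTheory.integral_smul, intervalIntegral.integral_of_le hT]
  congr 1
  apply integral_congr_ae
  filter_upwards with r
  congr 1
  ring

lemma core_bound {H : ℝ → X} (hm : AEStronglyMeasurable H volume) {C : ℝ}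
    (hC : ∀ x, ‖H x‖ ≤ C) (φ : SchwartzMap ℝ ℂ) {t T : ℝ} (hT : 0 ≤ T)
    (hprod : Integrable (fun p : ℝ × ℝ => (φ p.2 : ℂ) • H (t + p.1 - p.2))
      ((volume.restrict (Set.Ioc 0 T)).prod volume)) :
    ‖(∫ s : ℝ, (φ s : ℂ)) • (∫ r in (0:ℝ)..T, H (t + r))
        - ∫ r in (0:ℝ)..T, convol H (fun a => (φ a : ℂ)) (t + r)‖
      ≤ (2 * C) * ∫ s : ℝ, ‖s‖ * ‖φ s‖ := by
  set V : X := ∫ r in (0:ℝ)..T, H (t + r) with hV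
  have hfub := fubini_conv φ hT hprod
  rw [hfub]
  have h1 : (∫ s : ℝ, (φ s : ℂ)) • V = ∫ s : ℝ, (φ s : ℂ) • V :=
    (integral_smul_const _ V).symm
  have hint1 : Integrable (fun s => (φ s : ℂ) • V) volume := φ.integrable.smul_const V
  have hint2 : Integrable (fun s : ℝ => (φ s : ℂ) • (∫ r in (0:ℝ)..T, H (t - s + r))) volume := by
    have := hprod.integral_prod_right
    apply this.congr
    filter_upwards with s
    rw [MeasureTheory.integral_smul, intervalIntegral.integral_of_le hT]
    congr 1
    apply integral_congr_ae
    filter_upwards with r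
    congr 1
    ring
  rw [h1, ← integral_sub hint1 hint2]
  have hKint : Integrable (fun s : ℝ => (2 * C) * (‖s‖ * ‖φ s‖)) volume := by
    have := (φ.integrable_pow_mul volume 1).const_mul (2 * C)
    simpa using this
  refine (norm_integral_le_of_norm_le hKint (Filter.Eventually.of_forall fun s => ?_)).trans_eq ?_
  · rw [← smul_sub, norm_smul]
    have hb := avg_shift_bound hm hC t s T
    rw [← hV] at hb
    calc ‖(φ s : ℂ)‖ * ‖V - ∫ r in (0:ℝ)..T, H (t - s + r)‖
        ≤ ‖(φ s : ℂ)‖ * (2 * C * |s|) :=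
          mul_le_mul_of_nonneg_left hb (norm_nonneg _)
      _ = (2 * C) * (‖s‖ * ‖φ s‖) := by
          rw [show ‖s‖ = |s| from Real.norm_eq_abs s]
          ring
  · rw [MeasureTheory.integral_const_mul]


lemma conv_loc_bdd {H : ℝ → X} (hm : AEStronglyMeasurable H volume) {C : ℝ}
    (hC : ∀ x, ‖H x‖ ≤ C) (φ : SchwartzMap ℝ ℂ) (w : ℝ) :
    Integrable (fun s => (φ s : ℂ) • H (w - s)) volume := by
  refine Integrable.mono' (g := fun s => ‖(φ s : ℂ)‖ * C) (φ.integrable.norm.mul_const C)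
    ?_ (Filter.Eventually.of_forall fun s => ?_)
  · refine (φ.continuous.aestronglyMeasurable).smul ?_
    exact hm.comp_quasiMeasurePreserving
      (Measure.measurePreserving_sub_left volume w).quasiMeasurePreserving
  · rw [norm_smul]
    exact mul_le_mul_of_nonneg_left (hC _) (norm_nonneg _)

lemma conv_norm_bdd {H : ℝ → X} (hm : AEStronglyMeasurable H volume) {C : ℝ}
    (hC : ∀ x, ‖H x‖ ≤ C) (hC0 : 0 ≤ C) (φ : SchwartzMap ℝ ℂ) (w : ℝ) :
    (∫ s : ℝ, ‖(φ s : ℂ) • H (w - s)‖) ≤ C * ∫ s : ℝ, ‖(φ s : ℂ)‖ := by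
  calc (∫ s : ℝ, ‖(φ s : ℂ) • H (w - s)‖) ≤ ∫ s : ℝ, C * ‖(φ s : ℂ)‖ := by
        refine integral_mono (conv_loc_bdd hm hC φ w).norm (φ.integrable.norm.const_mul C)
          fun s => ?_
        rw [norm_smul]
        calc ‖(φ s : ℂ)‖ * ‖H (w - s)‖ ≤ ‖(φ s : ℂ)‖ * C :=
              mul_le_mul_of_nonneg_left (hC _) (norm_nonneg _)
          _ = C * ‖(φ s : ℂ)‖ := mul_comm _ _
    _ = C * ∫ s : ℝ, ‖(φ s : ℂ)‖ := MeasureTheory.integral_const_mul C _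

lemma ergodic_of_bounded (F : ℝ → X) (hm : AEStronglyMeasurable F volume) {C : ℝ}
    (hC : ∀ t, ‖F t‖ ≤ C) (φ : SchwartzMap ℝ ℂ)
    (hconv : convol F (fun a => (φ a : ℂ)) = 0)
    (hc : (∫ s : ℝ, (φ s : ℂ)) ≠ 0) : ErgodicMean Set.univ F 0 := by
  intro ε hε
  set c : ℂ := ∫ s : ℝ, (φ s : ℂ) with hcdef
  set Kφ : ℝ := ∫ s : ℝ, ‖s‖ * ‖φ s‖ with hKdef
  have hK0 : 0 ≤ Kφ := integral_nonneg fun s => by positivity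
  have hC0 : 0 ≤ C := (norm_nonneg (F 0)).trans (hC 0)
  have hc0 : 0 < ‖c‖ := norm_pos_iff.mpr hc
  refine ⟨2 * C * Kφ / (ε * ‖c‖) + 1, by positivity, fun T hT t _ => ?_⟩
  have hT0 : 0 < T := lt_of_lt_of_le (by positivity) hT
  have hcore := core_bound hm hC φ hT0.le
    (prod_int hm φ t T (conv_loc_bdd hm hC φ) (conv_norm_bdd hm hC hC0 φ))
  rw [hconv] at hcore
  simp only [Pi.zero_apply, intervalIntegral.integral_zero, sub_zero] at hcore
  rw [norm_smul] at hcore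
  set V : X := ∫ r in (0:ℝ)..T, F (t + r) with hVdef
  rw [sub_zero, norm_smul]
  have h1T : ‖(1:ℝ) / T‖ = 1 / T := by rw [Real.norm_eq_abs, abs_of_pos (by positivity)]
  rw [h1T, div_mul_eq_mul_div, div_le_iff₀ hT0, one_mul]
  -- from hcore : ‖c‖ * ‖V‖ ≤ 2 * C * Kφ
  have h2 : 2 * C * Kφ / (ε * ‖c‖) * (ε * ‖c‖) = 2 * C * Kφ :=
    div_mul_cancel₀ _ (ne_of_gt (mul_pos hε hc0))
  nlinarith [mul_le_mul_of_nonneg_left hT (le_of_lt hε), norm_nonneg V,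
    mul_pos hε hc0, mul_le_mul_of_nonneg_left hcore (le_of_lt hε)]


lemma uc_growth {u : ℝ → X} {δ : ℝ} (hδ : 0 < δ)
    (h : ∀ a b : ℝ, |a - b| ≤ δ → ‖u a - u b‖ ≤ 1) :
    ∀ a b : ℝ, ‖u a - u b‖ ≤ (2 / δ) * |a - b| + 1 := by
  have key : ∀ n : ℕ, ∀ a b : ℝ, |a - b| ≤ n * (δ / 2) → ‖u a - u b‖ ≤ n := by
    intro n
    induction n with
    | zero =>
      intro a b hab
      simp only [Nat.cast_zero, zero_mul] at hab
      have hab0 : |a - b| = 0 := le_antisymm hab (abs_nonneg _)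
      have : a = b := by
        have := abs_eq_zero.mp hab0
        linarith
      simp [this]
    | succ n ih =>
      intro a b hab
      push_cast at hab ⊢
      have hn1 : (0:ℝ) < (n:ℝ) + 1 := by positivity
      set cpt : ℝ := a + (b - a) / ((n:ℝ) + 1) with hcpt
      have h1 : |a - cpt| ≤ δ := by
        have he : a - cpt = (a - b) / ((n:ℝ) + 1) := by
          rw [hcpt]; field_simp; ring
        rw [he, abs_div, abs_of_pos hn1, div_le_iff₀ hn1]
        nlinarith [abs_nonneg (a - b)]
      have h2 : |cpt - b| ≤ (n:ℝ) * (δ / 2) := by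
        have he : cpt - b = (a - b) * n / ((n:ℝ) + 1) := by
          rw [hcpt]; field_simp; ring
        rw [he, abs_div, abs_of_pos hn1, div_le_iff₀ hn1, abs_mul,
          _root_.abs_of_nonneg (Nat.cast_nonneg (α := ℝ) n)]
        nlinarith [abs_nonneg (a - b), Nat.cast_nonneg (α := ℝ) n]
      have tri : ‖u a - u b‖ ≤ ‖u a - u cpt‖ + ‖u cpt - u b‖ := by
        have := norm_add_le (u a - u cpt) (u cpt - u b)
        rwa [sub_add_sub_cancel] at this
      have hb1 := h a cpt h1
      have hb2 := ih cpt b h2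
      linarith
  intro a b
  have hd2 : (0:ℝ) < δ / 2 := by positivity
  set n : ℕ := ⌈|a - b| / (δ / 2)⌉₊ with hn
  have h1 : |a - b| ≤ (n:ℝ) * (δ / 2) := by
    have := Nat.le_ceil (|a - b| / (δ / 2))
    rw [← hn] at this
    calc |a - b| = |a - b| / (δ / 2) * (δ / 2) := by field_simp
      _ ≤ (n:ℝ) * (δ / 2) := mul_le_mul_of_nonneg_right this hd2.le
  have h2 : (n:ℝ) ≤ |a - b| / (δ / 2) + 1 := by
    have := Nat.ceil_lt_add_one (by positivity : (0:ℝ) ≤ |a - b| / (δ / 2))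
    rw [← hn] at this
    exact this.le
  calc ‖u a - u b‖ ≤ (n:ℝ) := key n a b h1
    _ ≤ |a - b| / (δ / 2) + 1 := h2
    _ = (2 / δ) * |a - b| + 1 := by
        rw [div_div_eq_mul_div]
        ring

lemma conv_xi_integrable {ξ : ℝ → X} (hloc : LocallyIntegrable ξ volume) {R : ℝ}
    (hR : ∀ x : ℝ, R < |x| → ‖ξ x‖ ≤ 1) (φ : SchwartzMap ℝ ℂ) {Mφ : ℝ}
    (hMφ : ∀ s : ℝ, ‖(φ s : ℂ)‖ ≤ Mφ) (w : ℝ) :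
    Integrable (fun s => (φ s : ℂ) • ξ (w - s)) volume ∧
      (∫ s : ℝ, ‖(φ s : ℂ) • ξ (w - s)‖)
        ≤ Mφ * (∫ x in Set.Icc (-R) R, ‖ξ x‖) + ∫ s : ℝ, ‖(φ s : ℂ)‖ := by
  have hMφ0 : 0 ≤ Mφ := (norm_nonneg _).trans (hMφ 0)
  set ξ1 : ℝ → X := (Set.Icc (-R) R).indicator ξ with hξ1
  have hξ1i : Integrable ξ1 volume :=
    (hloc.integrableOn_isCompact isCompact_Icc).integrable_indicator measurableSet_Icc
  set ξ2 : ℝ → X := fun x => ξ x - ξ1 x with hξ2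
  have hξ2bd : ∀ x, ‖ξ2 x‖ ≤ 1 := by
    intro x
    by_cases hx : x ∈ Set.Icc (-R) R
    · simp [hξ2, hξ1, Set.indicator_of_mem hx]
    · simp only [hξ2, hξ1, Set.indicator_of_notMem hx, sub_zero]
      apply hR
      simp only [Set.mem_Icc, not_and_or, not_le] at hx
      rcases hx with h | h
      · calc R < -x := by linarith
          _ ≤ |x| := neg_le_abs x
      · calc R < x := h
          _ ≤ |x| := le_abs_self x
  have hξ2m : AEStronglyMeasurable ξ2 volume :=
    hloc.aestronglyMeasurable.sub hξ1i.aestronglyMeasurable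
  have hξ1w : Integrable (fun s => ξ1 (w - s)) volume := hξ1i.comp_sub_left w
  have hf1 : Integrable (fun s => (φ s : ℂ) • ξ1 (w - s)) volume := by
    refine Integrable.mono' (g := fun s => Mφ * ‖ξ1 (w - s)‖) (hξ1w.norm.const_mul Mφ)
      ((φ.continuous.aestronglyMeasurable).smul hξ1w.aestronglyMeasurable)
      (Filter.Eventually.of_forall fun s => ?_)
    rw [norm_smul]
    exact mul_le_mul_of_nonneg_right (hMφ s) (norm_nonneg _)
  have hf2 : Integrable (fun s => (φ s : ℂ) • ξ2 (w - s)) volume := by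
    refine Integrable.mono' (g := fun s => ‖(φ s : ℂ)‖) φ.integrable.norm
      ((φ.continuous.aestronglyMeasurable).smul
        (hξ2m.comp_quasiMeasurePreserving
          (Measure.measurePreserving_sub_left volume w).quasiMeasurePreserving))
      (Filter.Eventually.of_forall fun s => ?_)
    rw [norm_smul]
    calc ‖(φ s : ℂ)‖ * ‖ξ2 (w - s)‖ ≤ ‖(φ s : ℂ)‖ * 1 :=
          mul_le_mul_of_nonneg_left (hξ2bd _) (norm_nonneg _)
      _ = ‖(φ s : ℂ)‖ := mul_one _
  have hsplit : ∀ s : ℝ, (φ s : ℂ) • ξ (w - s)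
      = (φ s : ℂ) • ξ1 (w - s) + (φ s : ℂ) • ξ2 (w - s) := by
    intro s
    rw [← smul_add]
    congr 1
    simp [hξ2]
  have hint : Integrable (fun s => (φ s : ℂ) • ξ (w - s)) volume := by
    apply (hf1.add hf2).congr
    filter_upwards with s
    simp only [Pi.add_apply]
    exact (hsplit s).symm
  refine ⟨hint, ?_⟩
  have hn1 : (∫ s : ℝ, ‖(φ s : ℂ) • ξ1 (w - s)‖) ≤ Mφ * ∫ x in Set.Icc (-R) R, ‖ξ x‖ := by
    have e1 : (∫ s : ℝ, ‖ξ1 (w - s)‖) = ∫ x : ℝ, ‖ξ1 x‖ :=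
      integral_sub_left_eq_self (fun x => ‖ξ1 x‖) volume w
    have e2 : (∫ x : ℝ, ‖ξ1 x‖) = ∫ x in Set.Icc (-R) R, ‖ξ x‖ := by
      rw [hξ1]
      simp_rw [norm_indicator_eq_indicator_norm]
      exact MeasureTheory.integral_indicator measurableSet_Icc
    calc (∫ s : ℝ, ‖(φ s : ℂ) • ξ1 (w - s)‖) ≤ ∫ s : ℝ, Mφ * ‖ξ1 (w - s)‖ := by
          refine integral_mono hf1.norm (hξ1w.norm.const_mul Mφ) fun s => ?_
          rw [norm_smul]
          exact mul_le_mul_of_nonneg_right (hMφ s) (norm_nonneg _)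
      _ = Mφ * ∫ s : ℝ, ‖ξ1 (w - s)‖ := MeasureTheory.integral_const_mul Mφ _
      _ = Mφ * ∫ x in Set.Icc (-R) R, ‖ξ x‖ := by rw [e1, e2]
  have hn2 : (∫ s : ℝ, ‖(φ s : ℂ) • ξ2 (w - s)‖) ≤ ∫ s : ℝ, ‖(φ s : ℂ)‖ := by
    refine integral_mono hf2.norm φ.integrable.norm fun s => ?_
    rw [norm_smul]
    calc ‖(φ s : ℂ)‖ * ‖ξ2 (w - s)‖ ≤ ‖(φ s : ℂ)‖ * 1 :=
          mul_le_mul_of_nonneg_left (hξ2bd _) (norm_nonneg _)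
      _ = ‖(φ s : ℂ)‖ := mul_one _
  calc (∫ s : ℝ, ‖(φ s : ℂ) • ξ (w - s)‖)
      = ∫ s : ℝ, ‖(φ s : ℂ) • ξ1 (w - s) + (φ s : ℂ) • ξ2 (w - s)‖ := by
        apply MeasureTheory.integral_congr_ae
        filter_upwards with s
        rw [hsplit s]
    _ ≤ ∫ s : ℝ, (‖(φ s : ℂ) • ξ1 (w - s)‖ + ‖(φ s : ℂ) • ξ2 (w - s)‖) := by
        refine integral_mono ?_ (hf1.norm.add hf2.norm) fun s => norm_add_le _ _
        apply ((hf1.add hf2).norm.congr)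
        filter_upwards with s
        simp only [Pi.add_apply]
    _ = (∫ s : ℝ, ‖(φ s : ℂ) • ξ1 (w - s)‖) + ∫ s : ℝ, ‖(φ s : ℂ) • ξ2 (w - s)‖ :=
        integral_add hf1.norm hf2.norm
    _ ≤ _ := add_le_add hn1 hn2


lemma partB (F u ξ : ℝ → X) (huc : UniformContinuous u)
    (hξloc : LocallyIntegrable ξ volume)
    (hξ0 : Filter.Tendsto ξ (cocompact ℝ) (nhds 0))
    (hsum : ∀ t, F t = u t + ξ t) (φ : SchwartzMap ℝ ℂ)
    (hconv : convol F (fun a => (φ a : ℂ)) = 0)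
    (hc : (∫ s : ℝ, (φ s : ℂ)) ≠ 0) :
    (∃ C, ∀ t, ‖u t‖ ≤ C) ∧ ErgodicMean Set.univ u 0 ∧ ErgodicMean Set.univ F 0 := by
  set c : ℂ := ∫ s : ℝ, (φ s : ℂ) with hcdef
  have hc0 : 0 < ‖c‖ := norm_pos_iff.mpr hc
  set Kφ : ℝ := ∫ s : ℝ, ‖s‖ * ‖φ s‖ with hKφdef
  have hKφ0 : 0 ≤ Kφ := integral_nonneg fun s => by positivity
  set L1 : ℝ := ∫ s : ℝ, ‖(φ s : ℂ)‖ with hL1def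
  have hL10 : 0 ≤ L1 := integral_nonneg fun s => norm_nonneg _
  set Mφ : ℝ := (SchwartzMap.seminorm ℝ 0 0) φ with hMφdef
  have hMφ : ∀ s : ℝ, ‖(φ s : ℂ)‖ ≤ Mφ := fun s => SchwartzMap.norm_le_seminorm ℝ φ s
  have hMφ0 : 0 ≤ Mφ := (norm_nonneg _).trans (hMφ 0)
  -- uniform continuity modulus and growth
  obtain ⟨δ, hδ0, hδ⟩ := Metric.uniformContinuous_iff.mp huc 1 one_pos
  have hmod : ∀ a b : ℝ, |a - b| ≤ δ / 2 → ‖u a - u b‖ ≤ 1 := by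
    intro a b hab
    have : dist a b < δ := by rw [Real.dist_eq]; linarith
    have := hδ this
    rw [dist_eq_norm] at this
    exact this.le
  set K : ℝ := 2 / (δ / 2) with hKdef
  have hK0 : 0 ≤ K := by positivity
  have hgrow : ∀ a b : ℝ, ‖u a - u b‖ ≤ K * |a - b| + 1 := uc_growth (by positivity) hmod
  have hu_cont : Continuous u := huc.continuous
  have hu_m : AEStronglyMeasurable u volume := hu_cont.aestronglyMeasurable
  have hKint : Integrable (fun s : ℝ => K * (‖s‖ * ‖φ s‖)) volume := by
    have h2 := (φ.integrable_pow_mul volume 1).const_mul K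
    simpa using h2
  -- integrability of the u-convolution integrand
  have hIu : ∀ w : ℝ, Integrable (fun s => (φ s : ℂ) • u (w - s)) volume := by
    intro w
    refine Integrable.mono'
      (g := fun s => (‖u w‖ + 1) * ‖(φ s : ℂ)‖ + K * (‖s‖ * ‖φ s‖))
      ((φ.integrable.norm.const_mul _).add hKint)
      ((φ.continuous.aestronglyMeasurable).smul
        ((hu_cont.comp (continuous_const.sub continuous_id)).aestronglyMeasurable))
      (Filter.Eventually.of_forall fun s => ?_)
    rw [norm_smul]
    have hb : ‖u (w - s)‖ ≤ ‖u w‖ + (K * |s| + 1) := by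
      have h4 := hgrow (w - s) w
      have he : |w - s - w| = |s| := by rw [show w - s - w = -s by ring, abs_neg]
      rw [he] at h4
      calc ‖u (w - s)‖ ≤ ‖u (w - s) - u w‖ + ‖u w‖ := by
            have := norm_add_le (u (w - s) - u w) (u w)
            rwa [sub_add_cancel] at this
        _ ≤ ‖u w‖ + (K * |s| + 1) := by linarith
    calc ‖(φ s : ℂ)‖ * ‖u (w - s)‖ ≤ ‖(φ s : ℂ)‖ * (‖u w‖ + (K * |s| + 1)) :=
          mul_le_mul_of_nonneg_left hb (norm_nonneg _)
      _ = (‖u w‖ + 1) * ‖(φ s : ℂ)‖ + K * (‖s‖ * ‖φ s‖) := by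
          rw [show ‖s‖ = |s| from Real.norm_eq_abs s]
          ring
  -- the ξ-convolution facts, radius for bound 1
  obtain ⟨R₁, hR₁0, hR₁⟩ := cocompact_bound hξ0 one_pos
  set I₁ : ℝ := ∫ x in Set.Icc (-R₁) R₁, ‖ξ x‖ with hI₁def
  have hxi := fun w => conv_xi_integrable hξloc hR₁ φ hMφ w
  -- pointwise identity
  have hconv_pt : ∀ w : ℝ, (∫ s : ℝ, (φ s : ℂ) • u (w - s))
      = - ∫ s : ℝ, (φ s : ℂ) • ξ (w - s) := by
    intro w
    have h0 : convol F (fun a => (φ a : ℂ)) w = 0 := by rw [hconv]; rfl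
    have he : convol F (fun a => (φ a : ℂ)) w
        = (∫ s : ℝ, (φ s : ℂ) • u (w - s)) + ∫ s : ℝ, (φ s : ℂ) • ξ (w - s) := by
      calc convol F (fun a => (φ a : ℂ)) w
          = ∫ s : ℝ, ((φ s : ℂ) • u (w - s) + (φ s : ℂ) • ξ (w - s)) := by
            apply MeasureTheory.integral_congr_ae
            filter_upwards with s
            show (φ s : ℂ) • F (w - s) = _
            rw [hsum (w - s), smul_add]
        _ = _ := integral_add (hIu w) (hxi w).1
    rw [he] at h0
    exact eq_neg_of_add_eq_zero_left h0
  -- boundedness of u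
  set Cu : ℝ := (K * Kφ + L1 + (Mφ * I₁ + L1)) / ‖c‖ with hCudef
  have hubd : ∀ t, ‖u t‖ ≤ Cu := by
    intro t
    have h1 : c • u t = ∫ s : ℝ, (φ s : ℂ) • u t := (integral_smul_const _ _).symm
    have hint_diff : Integrable (fun s => (φ s : ℂ) • (u t - u (t - s))) volume := by
      apply ((φ.integrable.smul_const (u t)).sub (hIu t)).congr
      filter_upwards with s
      simp only [Pi.sub_apply]
      rw [smul_sub]
    have h2 : (∫ s : ℝ, (φ s : ℂ) • u t)
        = (∫ s : ℝ, (φ s : ℂ) • (u t - u (t - s))) + ∫ s : ℝ, (φ s : ℂ) • u (t - s) := by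
      rw [← integral_add hint_diff (hIu t)]
      apply MeasureTheory.integral_congr_ae
      filter_upwards with s
      rw [smul_sub, sub_add_cancel]
    have h3 : c • u t = (∫ s : ℝ, (φ s : ℂ) • (u t - u (t - s)))
        - ∫ s : ℝ, (φ s : ℂ) • ξ (t - s) := by
      rw [h1, h2, hconv_pt t, ← sub_eq_add_neg]
    have hb1 : ‖∫ s : ℝ, (φ s : ℂ) • (u t - u (t - s))‖ ≤ K * Kφ + L1 := by
      refine (norm_integral_le_of_norm_le (g := fun s => K * (‖s‖ * ‖φ s‖) + ‖(φ s : ℂ)‖)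
        (hKint.add φ.integrable.norm) (Filter.Eventually.of_forall fun s => ?_)).trans_eq ?_
      · rw [norm_smul]
        have hb := hgrow t (t - s)
        have he : |t - (t - s)| = |s| := by rw [show t - (t - s) = s by ring]
        rw [he] at hb
        calc ‖(φ s : ℂ)‖ * ‖u t - u (t - s)‖ ≤ ‖(φ s : ℂ)‖ * (K * |s| + 1) :=
              mul_le_mul_of_nonneg_left hb (norm_nonneg _)
          _ = K * (‖s‖ * ‖φ s‖) + ‖(φ s : ℂ)‖ := by
              rw [show ‖s‖ = |s| from Real.norm_eq_abs s]
              ring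
      · rw [integral_add hKint φ.integrable.norm, MeasureTheory.integral_const_mul]
    have hb2 : ‖∫ s : ℝ, (φ s : ℂ) • ξ (t - s)‖ ≤ Mφ * I₁ + L1 :=
      (norm_integral_le_integral_norm _).trans (hxi t).2
    have h5 : ‖c‖ * ‖u t‖ ≤ K * Kφ + L1 + (Mφ * I₁ + L1) := by
      rw [← norm_smul, h3]
      calc ‖_ - _‖ ≤ ‖∫ s : ℝ, (φ s : ℂ) • (u t - u (t - s))‖
            + ‖∫ s : ℝ, (φ s : ℂ) • ξ (t - s)‖ := norm_sub_le _ _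
        _ ≤ _ := add_le_add hb1 hb2
    rw [hCudef, le_div_iff₀ hc0]
    calc ‖u t‖ * ‖c‖ = ‖c‖ * ‖u t‖ := mul_comm _ _
      _ ≤ _ := h5
  have hCu0 : 0 ≤ Cu := (norm_nonneg (u 0)).trans (hubd 0)
  -- ergodicity of u
  have hEu : ErgodicMean Set.univ u 0 := by
    intro ε hε
    set ε' : ℝ := ε * ‖c‖ / (2 * (L1 + 1)) with hε'def
    have hε'0 : 0 < ε' := by positivity
    obtain ⟨R₂, hR₂0, hR₂⟩ := cocompact_bound hξ0 hε'0
    set I₂ : ℝ := ∫ x in Set.Icc (-R₂) R₂, ‖ξ x‖ with hI₂def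
    have hI₂0 : 0 ≤ I₂ := setIntegral_nonneg measurableSet_Icc fun x _ => norm_nonneg _
    have hpos : (0:ℝ) < ε / 2 * ‖c‖ := by positivity
    have hnum : (0:ℝ) ≤ 2 * Cu * Kφ + L1 * I₂ := by
      have := mul_nonneg (mul_nonneg (by norm_num : (0:ℝ) ≤ 2) hCu0) hKφ0
      nlinarith [mul_nonneg hL10 hI₂0]
    have hT₀pos : (0:ℝ) < (2 * Cu * Kφ + L1 * I₂) / (ε / 2 * ‖c‖) + 1 := by
      nlinarith [div_nonneg hnum hpos.le]
    refine ⟨(2 * Cu * Kφ + L1 * I₂) / (ε / 2 * ‖c‖) + 1, hT₀pos, fun T hT t _ => ?_⟩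
    have hT0 : 0 < T := lt_of_lt_of_le hT₀pos hT
    have hcore := core_bound hu_m hubd φ hT0.le
      (prod_int hu_m φ t T hIu (conv_norm_bdd hu_m hubd hCu0 φ))
    have hxiprod := prod_int hξloc.aestronglyMeasurable φ t T
      (fun w => (hxi w).1) (fun w => (hxi w).2)
    have hfubξ := fubini_conv φ hT0.le hxiprod
    have hW : (∫ r in (0:ℝ)..T, convol u (fun a => (φ a : ℂ)) (t + r))
        = - ∫ s : ℝ, (φ s : ℂ) • (∫ r in (0:ℝ)..T, ξ (t - s + r)) := by
      have hpt : ∀ r ∈ Set.uIcc (0:ℝ) T, convol u (fun a => (φ a : ℂ)) (t + r)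
          = - convol ξ (fun a => (φ a : ℂ)) (t + r) := by
        intro r _
        show (∫ s : ℝ, (φ s : ℂ) • u (t + r - s)) = - ∫ s : ℝ, (φ s : ℂ) • ξ (t + r - s)
        exact hconv_pt (t + r)
      rw [intervalIntegral.integral_congr hpt, intervalIntegral.integral_neg, hfubξ]
    have hWb : ‖∫ s : ℝ, (φ s : ℂ) • (∫ r in (0:ℝ)..T, ξ (t - s + r))‖
        ≤ L1 * (I₂ + ε' * T) := by
      refine (norm_integral_le_of_norm_le (g := fun s => ‖(φ s : ℂ)‖ * (I₂ + ε' * T))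
        (φ.integrable.norm.mul_const _) (Filter.Eventually.of_forall fun s => ?_)).trans_eq ?_
      · rw [norm_smul]
        exact mul_le_mul_of_nonneg_left
          (window_bound hξloc hR₂0.le hε'0.le hR₂ (t - s) T hT0.le) (norm_nonneg _)
      · rw [MeasureTheory.integral_mul_const]
    set Vu : X := ∫ r in (0:ℝ)..T, u (t + r) with hVudef
    have hVu_b : ‖c‖ * ‖Vu‖ ≤ 2 * Cu * Kφ + L1 * (I₂ + ε' * T) := by
      rw [hW] at hcore
      set Z : X := ∫ s : ℝ, (φ s : ℂ) • (∫ r in (0:ℝ)..T, ξ (t - s + r)) with hZdef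
      have h6 : ‖c • Vu‖ ≤ ‖c • Vu - -Z‖ + ‖-Z‖ := by
        have := norm_add_le (c • Vu - -Z) (-Z)
        rwa [sub_add_cancel] at this
      rw [norm_neg] at h6
      rw [← norm_smul]
      calc ‖c • Vu‖ ≤ ‖c • Vu - -Z‖ + ‖Z‖ := h6
        _ ≤ 2 * Cu * Kφ + L1 * (I₂ + ε' * T) := by
            have := hcore
            linarith [hWb]
    rw [sub_zero, norm_smul]
    have h1T : ‖(1:ℝ) / T‖ = 1 / T := by rw [Real.norm_eq_abs, abs_of_pos (by positivity)]
    rw [h1T, div_mul_eq_mul_div, div_le_iff₀ hT0, one_mul]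
    -- final arithmetic
    have e1 : (2 * Cu * Kφ + L1 * I₂) / (ε / 2 * ‖c‖) * (ε / 2 * ‖c‖)
        = 2 * Cu * Kφ + L1 * I₂ := div_mul_cancel₀ _ (ne_of_gt hpos)
    have e2 : (ε / 2 * ‖c‖) * ((2 * Cu * Kφ + L1 * I₂) / (ε / 2 * ‖c‖) + 1)
        ≤ (ε / 2 * ‖c‖) * T := mul_le_mul_of_nonneg_left hT hpos.le
    have e3 : L1 * ε' ≤ ε / 2 * ‖c‖ := by
      rw [hε'def, ← mul_div_assoc, div_le_iff₀ (by positivity : (0:ℝ) < 2 * (L1 + 1))]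
      nlinarith [mul_pos hε hc0]
    have e4 : L1 * (ε' * T) ≤ (ε / 2 * ‖c‖) * T := by
      calc L1 * (ε' * T) = (L1 * ε') * T := by ring
        _ ≤ (ε / 2 * ‖c‖) * T := mul_le_mul_of_nonneg_right e3 hT0.le
    have hVuN : 0 ≤ ‖Vu‖ := norm_nonneg _
    nlinarith [hVu_b, mul_pos hε hc0]
  -- ergodicity of F
  have hEξ : ErgodicMean Set.univ ξ 0 := ergodic_xi hξloc hξ0
  have hEF : ErgodicMean Set.univ F 0 := by
    intro ε hε
    obtain ⟨T₁, hT₁0, h1⟩ := hEu (ε / 2) (half_pos hε)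
    obtain ⟨T₂, hT₂0, h2⟩ := hEξ (ε / 2) (half_pos hε)
    refine ⟨max T₁ T₂, lt_max_of_lt_left hT₁0, fun T hT t ht => ?_⟩
    have hu_ii : IntervalIntegrable (fun r => u (t + r)) volume 0 T :=
      (hu_cont.comp (continuous_const.add continuous_id)).intervalIntegrable 0 T
    have hξ_ii : IntervalIntegrable (fun r => ξ (t + r)) volume 0 T := by
      simpa using (loc_intervalIntegrable hξloc t (t + T)).comp_add_left t
    have e : (∫ r in (0:ℝ)..T, F (t + r))
        = (∫ r in (0:ℝ)..T, u (t + r)) + ∫ r in (0:ℝ)..T, ξ (t + r) := by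
      rw [← intervalIntegral.integral_add hu_ii hξ_ii]
      apply intervalIntegral.integral_congr
      intro r _
      exact hsum (t + r)
    have hb1 := h1 T (le_trans (le_max_left _ _) hT) t ht
    have hb2 := h2 T (le_trans (le_max_right _ _) hT) t ht
    rw [sub_zero] at hb1 hb2 ⊢
    rw [e, smul_add]
    calc ‖(1 / T) • (∫ r in (0:ℝ)..T, u (t + r)) + (1 / T) • ∫ r in (0:ℝ)..T, ξ (t + r)‖
        ≤ ‖(1 / T) • ∫ r in (0:ℝ)..T, u (t + r)‖
          + ‖(1 / T) • ∫ r in (0:ℝ)..T, ξ (t + r)‖ := norm_add_le _ _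
      _ ≤ ε / 2 + ε / 2 := add_le_add hb1 hb2
      _ = ε := by ring
  exact ⟨⟨Cu, hubd⟩, hEu, hEF⟩

end AuxProofs

end
/-- (a) a bounded measurable `F` with `0 ∉ sp_{0,S}(F)` is ergodic with mean 0;
(b) a slowly oscillating `F` with `0 ∉ sp_{0,S}(F)` is `u + ξ` with `u` BUC ergodic with
mean 0 and `ξ ∈ L¹_{loc,0}`; in particular `F` is ergodic with mean 0. -/
theorem stmt_12 {X : Type*} [NormedAddCommGroup X] [NormedSpace ℂ X] [CompleteSpace X] :
    (∀ F : ℝ → X, MeasureTheory.AEStronglyMeasurable F MeasureTheory.volume →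
      (∃ C, ∀ t, ‖F t‖ ≤ C) →
      (0:ℝ) ∉ {ω : ℝ | ∀ φ : SchwartzMap ℝ ℂ,
          convol F (fun t => φ t) = 0 → ft (fun t => φ t) ω = 0} →
      ErgodicMean Set.univ F 0) ∧
    (∀ F : ℝ → X, SOOn Set.univ F →
      (0:ℝ) ∉ {ω : ℝ | ∀ φ : SchwartzMap ℝ ℂ,
          convol F (fun t => φ t) = 0 → ft (fun t => φ t) ω = 0} →
      (∃ u ξ : ℝ → X, UniformContinuous u ∧ (∃ C, ∀ t, ‖u t‖ ≤ C) ∧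
          ErgodicMean Set.univ u 0 ∧ L1loc0 Set.univ ξ ∧ ∀ t : ℝ, F t = u t + ξ t) ∧
        ErgodicMean Set.univ F 0) := by
  constructor
  · intro F hm hbd hsp
    rw [Set.mem_setOf_eq] at hsp
    push_neg at hsp
    obtain ⟨φ, h1, h2⟩ := hsp
    rw [ft_zero_eq] at h2
    obtain ⟨C, hC⟩ := hbd
    exact ergodic_of_bounded F hm hC φ h1 h2
  · intro F hSO hsp
    rw [Set.mem_setOf_eq] at hsp
    push_neg at hsp
    obtain ⟨φ, h1, h2⟩ := hsp
    rw [ft_zero_eq] at h2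
    obtain ⟨u, ξ, huc, hL, hsum⟩ := hSO
    have huc' : UniformContinuous u := by rwa [uniformContinuousOn_univ] at huc
    obtain ⟨hξloc, hξ0⟩ := hL
    have hξloc' : LocallyIntegrable ξ volume := locallyIntegrableOn_univ.mp hξloc
    have hξ0' : Filter.Tendsto ξ (cocompact ℝ) (nhds 0) := by
      simpa using hξ0
    have hsum' : ∀ t, F t = u t + ξ t := fun t => hsum t (Set.mem_univ t)
    obtain ⟨hbd, hEu, hEF⟩ := partB F u ξ huc' hξloc' hξ0' hsum' φ h1 h2
    exact ⟨⟨u, ξ, huc', hbd, hEu, ⟨hξloc, hξ0⟩, hsum'⟩, hEF⟩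
end

section
/- Let X be a complex Banach space, J ∈ {ℝ, ℝ₊}, and let A ⊆ L∞(J,X) be a closed subspace satisfying condition (2.3) such that γ_λ·a is ergodic for every a ∈ A and every λ ∈ ℝ. Let F ∈ L∞(J,X) and ω ∈ ℝ with ω ∉ sp_{A,S}(F). Then γ_{−ω}F is ergodic. If moreover every γ_λ·a (a ∈ A, λ ∈ ℝ) is ergodic with mean 0, then γ_{−ω}F is ergodic with mean 0. -/
open MeasureTheory Filter Topology Complex Set

noncomputable section Stmt13Aux

open intervalIntegral

variable {X : Type*} [NormedAddCommGroup X] [NormedSpace ℂ X] [CompleteSpace X]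

private lemma norm_exp_eq_one (ω x : ℝ) :
    ‖Complex.exp (-(Complex.I * (ω : ℂ) * (x : ℂ)))‖ = 1 := by
  rw [Complex.norm_exp]
  have : (-(Complex.I * (ω : ℂ) * (x : ℂ))).re = 0 := by simp
  rw [this, Real.exp_zero]

private lemma exp_add_e (ω x y : ℝ) :
    Complex.exp (-(Complex.I * (ω : ℂ) * ((x + y : ℝ) : ℂ)))
      = Complex.exp (-(Complex.I * (ω : ℂ) * (x : ℂ)))
        * Complex.exp (-(Complex.I * (ω : ℂ) * (y : ℂ))) := by
  rw [← Complex.exp_add]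
  congr 1
  push_cast
  ring

private lemma transfer_ergodic (J : Set ℝ) (P Q : ℝ → X) (m : X) (K : ℝ) (hK : 0 ≤ K)
    (hkey : ∀ T : ℝ, 0 < T → ∀ t ∈ J,
      ‖(1 / T) • (∫ s in (0:ℝ)..T, P (t + s)) - (1 / T) • (∫ s in (0:ℝ)..T, Q (t + s))‖ ≤ K / T)
    (hQ : ErgodicMean J Q m) : ErgodicMean J P m := by
  intro ε hε
  obtain ⟨T₁, hT₁pos, h1⟩ := hQ (ε / 2) (half_pos hε)
  refine ⟨max T₁ (2 * K / ε + 1), lt_of_lt_of_le hT₁pos (le_max_left _ _), fun T hT t ht => ?_⟩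
  have hT1 : T₁ ≤ T := le_trans (le_max_left _ _) hT
  have hT2 : 2 * K / ε + 1 ≤ T := le_trans (le_max_right _ _) hT
  have hTpos : 0 < T := lt_of_lt_of_le hT₁pos hT1
  have e1 := hkey T hTpos t ht
  have e2 := h1 T hT1 t ht
  have e3 : K / T ≤ ε / 2 := by
    have h5 : 2 * K / ε ≤ T := by linarith
    have h6 : 2 * K ≤ T * ε := (div_le_iff₀ hε).mp h5
    rw [div_le_iff₀ hTpos]
    nlinarith
  have heq : (1 / T) • (∫ s in (0:ℝ)..T, P (t + s)) - m
      = ((1 / T) • (∫ s in (0:ℝ)..T, P (t + s)) - (1 / T) • (∫ s in (0:ℝ)..T, Q (t + s)))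
        + ((1 / T) • (∫ s in (0:ℝ)..T, Q (t + s)) - m) := by abel
  rw [heq]
  exact (norm_add_le _ _).trans (by linarith)

private lemma key_est (J : Set ℝ) (hJ : J = Set.univ ∨ J = Set.Ici (0:ℝ))
    (G : ℝ → X) (hGm : StronglyMeasurable G) (C : ℝ) (hGb : ∀ u, ‖G u‖ ≤ C)
    (φ : SchwartzMap ℝ ℂ) (ω : ℝ) (hft : ft (fun u => φ u) ω = 1)
    (T : ℝ) (hT : 0 < T) (t : ℝ) (ht : t ∈ J) :
    ‖(∫ s in (0:ℝ)..T, Complex.exp (-(Complex.I * (ω : ℂ) * ((t + s : ℝ) : ℂ))) • G (t + s)) -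
      (∫ s in (0:ℝ)..T, Complex.exp (-(Complex.I * (ω : ℂ) * ((t + s : ℝ) : ℂ))) •
        (J.indicator (convol G (fun u => φ u)) (t + s)))‖
      ≤ ∫ r : ℝ, ‖φ r‖ * (2 * C * |r|) := by
  set e : ℝ → ℂ := fun x => Complex.exp (-(Complex.I * (ω : ℂ) * (x : ℂ))) with he
  have hne : ∀ x, ‖e x‖ = 1 := fun x => norm_exp_eq_one ω x
  have hee : ∀ x y : ℝ, e (x + y) = e x * e y := fun x y => exp_add_e ω x y
  have hec : Continuous e := by
    apply Complex.continuous_exp.comp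
    continuity
  set h : ℝ → X := fun u => e u • G (t + u) with hh
  have hhm : StronglyMeasurable h :=
    hec.stronglyMeasurable.smul (hGm.comp_measurable (measurable_const.add measurable_id))
  have hhb : ∀ u, ‖h u‖ ≤ C := by
    intro u
    rw [hh]
    simp only
    rw [norm_smul, hne, one_mul]
    exact hGb _
  have hC0 : 0 ≤ C := le_trans (norm_nonneg _) (hGb 0)
  have hhi : ∀ α β : ℝ, IntervalIntegrable h volume α β := by
    intro α β
    refine (_root_.intervalIntegrable_const (c := C) (μ := volume) (a := α) (b := β)).mono_fun
      hhm.aestronglyMeasurable.restrict ?_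
    exact Filter.Eventually.of_forall fun x => by
      simpa [Real.norm_eq_abs] using (hhb x).trans (le_abs_self C)
  set Iv : ℝ → ℝ → X := fun α β => ∫ u in α..β, h u with hIv
  have hIb : ∀ α β, ‖Iv α β‖ ≤ C * |β - α| := fun α β =>
    intervalIntegral.norm_integral_le_of_norm_le_const fun x _ => hhb x
  have hadd : ∀ α β γ : ℝ, Iv α β + Iv β γ = Iv α γ := fun α β γ =>
    intervalIntegral.integral_add_adjacent_intervals (hhi _ _) (hhi _ _)
  have hdiff : ∀ r : ℝ, ‖Iv 0 T - Iv (-r) (T - r)‖ ≤ 2 * C * |r| := by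
    intro r
    have a1 := hadd (-r) 0 (T - r)
    have a2 := hadd 0 (T - r) T
    have e1 : Iv 0 T - Iv (-r) (T - r) = Iv (T - r) T - Iv (-r) 0 := by
      rw [← a1, ← a2]; abel
    rw [e1]
    have b1 := hIb (T - r) T
    have b2 := hIb (-r) 0
    have habs1 : |T - (T - r)| = |r| := by rw [show T - (T - r) = r by ring]
    have habs2 : |(0:ℝ) - -r| = |r| := by rw [show (0:ℝ) - -r = r by ring]
    rw [habs1] at b1
    rw [habs2] at b2
    calc ‖Iv (T - r) T - Iv (-r) 0‖ ≤ ‖Iv (T - r) T‖ + ‖Iv (-r) 0‖ := norm_sub_le _ _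
    _ ≤ C * |r| + C * |r| := add_le_add b1 b2
    _ = 2 * C * |r| := by ring
  have hterm1 : (∫ s in (0:ℝ)..T,
        Complex.exp (-(Complex.I * (ω : ℂ) * ((t + s : ℝ) : ℂ))) • G (t + s))
      = e t • Iv 0 T := by
    rw [hIv]
    simp only
    rw [← intervalIntegral.integral_smul]
    apply intervalIntegral.integral_congr
    intro s _
    show Complex.exp (-(Complex.I * (ω : ℂ) * ((t + s : ℝ) : ℂ))) • G (t + s) = e t • h s
    rw [hh]
    simp only
    rw [← mul_smul, ← hee]
  have hmemJ : ∀ s ∈ Set.uIcc (0:ℝ) T, t + s ∈ J := by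
    intro s hs
    rcases hJ with hJ | hJ
    · rw [hJ]; trivial
    · rw [hJ] at ht ⊢
      rw [Set.uIcc_of_le hT.le] at hs
      exact add_nonneg ht hs.1
  have hterm2a : (∫ s in (0:ℝ)..T,
        Complex.exp (-(Complex.I * (ω : ℂ) * ((t + s : ℝ) : ℂ))) •
          (J.indicator (convol G (fun u => φ u)) (t + s)))
      = e t • ∫ s in (0:ℝ)..T, e s • convol G (fun u => φ u) (t + s) := by
    rw [← intervalIntegral.integral_smul]
    apply intervalIntegral.integral_congr
    intro s hs
    show Complex.exp (-(Complex.I * (ω : ℂ) * ((t + s : ℝ) : ℂ))) •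
        (J.indicator (convol G (fun u => φ u)) (t + s))
      = e t • (e s • convol G (fun u => φ u) (t + s))
    rw [Set.indicator_of_mem (hmemJ s hs), ← mul_smul, ← hee, he]
  set P : ℝ × ℝ → X := fun p => e p.1 • (φ p.2 • G (t + p.1 - p.2)) with hP
  have hPm : StronglyMeasurable P := by
    apply StronglyMeasurable.smul
    · exact (hec.comp continuous_fst).stronglyMeasurable
    · apply StronglyMeasurable.smul
      · exact (φ.continuous.comp continuous_snd).stronglyMeasurable
      · exact hGm.comp_measurable ((measurable_const.add measurable_fst).sub measurable_snd)
  have hPi : Integrable P ((volume.restrict (Set.Ioc 0 T)).prod volume) := by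
    have hb : Integrable (fun p : ℝ × ℝ => C * ‖φ p.2‖)
        ((volume.restrict (Set.Ioc 0 T)).prod volume) := by
      apply Integrable.mul_prod (f := fun _ : ℝ => C) (g := fun r : ℝ => ‖φ r‖)
      · refine (integrableOn_const_iff (C := C) (s := Set.Ioc 0 T) (μ := volume)).mpr ?_
        right
        exact measure_Ioc_lt_top
      · exact φ.integrable.norm
    apply hb.mono' hPm.aestronglyMeasurable
    apply Filter.Eventually.of_forall
    intro p
    rw [hP]
    simp only
    rw [norm_smul, hne, one_mul, norm_smul]
    calc ‖φ p.2‖ * ‖G (t + p.1 - p.2)‖ ≤ ‖φ p.2‖ * C := by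
          have := hGb (t + p.1 - p.2); gcongr
    _ = C * ‖φ p.2‖ := mul_comm _ _
  have hinner : ∀ r : ℝ, (∫ s in Set.Ioc (0:ℝ) T, P (s, r))
      = φ r • (e r • Iv (-r) (T - r)) := by
    intro r
    rw [← intervalIntegral.integral_of_le hT.le]
    have hps : ∀ s : ℝ, P (s, r) = φ r • (e r • h (s - r)) := by
      intro s
      rw [hP, hh]
      simp only
      rw [show t + s - r = t + (s - r) by ring]
      rw [smul_smul, smul_smul, smul_smul]
      congr 1
      have h2 := hee r (s - r)
      rw [show r + (s - r) = s by ring] at h2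
      rw [h2]
      ring
    simp_rw [hps]
    rw [intervalIntegral.integral_smul, intervalIntegral.integral_smul,
      intervalIntegral.integral_comp_sub_right h r, zero_sub]
  have hswap : (∫ s in (0:ℝ)..T, e s • convol G (fun u => φ u) (t + s))
      = ∫ r : ℝ, φ r • (e r • Iv (-r) (T - r)) := by
    rw [intervalIntegral.integral_of_le hT.le]
    have h1 : ∀ s : ℝ, e s • convol G (fun u => φ u) (t + s) = ∫ r : ℝ, P (s, r) := by
      intro s
      unfold convol
      rw [← MeasureTheory.integral_smul]
    simp_rw [h1]
    rw [MeasureTheory.integral_integral_swap (f := fun s r => P (s, r)) hPi]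
    exact integral_congr_ae (Filter.Eventually.of_forall fun r => hinner r)
  have hqi : Integrable (fun r : ℝ => φ r • (e r • Iv (-r) (T - r))) volume :=
    hPi.integral_prod_right.congr (Filter.Eventually.of_forall fun r => hinner r)
  have hq0i : Integrable (fun r : ℝ => (φ r * e r) • Iv 0 T) volume := by
    apply Integrable.smul_const
    apply Integrable.mono' φ.integrable.norm (φ.continuous.mul hec).aestronglyMeasurable
    apply Filter.Eventually.of_forall
    intro r
    rw [Pi.mul_apply, norm_mul, hne, mul_one]
  have hft1 : (∫ r : ℝ, (φ r * e r) • Iv 0 T) = Iv 0 T := by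
    rw [_root_.integral_smul_const]
    have hval : (∫ r : ℝ, φ r * e r) = 1 := by
      rw [← hft]
      unfold ft
      congr 1
      funext r
      rw [he]
      simp only
      ring
    rw [hval, one_smul]
  rw [hterm1, hterm2a, hswap, ← smul_sub, norm_smul, hne, one_mul]
  rw [← hft1, ← integral_sub hq0i hqi]
  apply MeasureTheory.norm_integral_le_of_norm_le
  · have hint := (φ.integrable_pow_mul volume 1).const_mul (2 * C)
    apply hint.congr
    apply Filter.Eventually.of_forall
    intro r
    show 2 * C * (‖r‖ ^ 1 * ‖φ r‖) = ‖φ r‖ * (2 * C * |r|)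
    rw [Real.norm_eq_abs, pow_one]
    ring
  · apply Filter.Eventually.of_forall
    intro r
    rw [mul_smul, ← smul_sub, ← smul_sub, norm_smul, norm_smul, hne, one_mul]
    have := hdiff r
    gcongr

end Stmt13Aux

/-- if every `γ_λ a` (`a ∈ A`) is ergodic and `ω ∉ sp_{A,S}(F)` for a bounded
`F`, then `γ_{-ω} F` is ergodic; if all the `γ_λ a` are ergodic with mean 0, so is
`γ_{-ω} F`. -/
theorem stmt_13 {X : Type*} [NormedAddCommGroup X] [NormedSpace ℂ X] [CompleteSpace X]
    (J : Set ℝ) (hJ : J = Set.univ ∨ J = Set.Ici (0:ℝ))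
    (A : Set (ℝ → X)) (hA : ClosedSubspaceLinf J A) (h23 : Cond23 J A)
    (F : ℝ → X) (hF : MemLinfOn J F) (ω : ℝ) (hω : ω ∉ spS J A F) :
    ((∀ a ∈ A, ∀ l : ℝ,
        IsErgodic J (fun t : ℝ => Complex.exp (Complex.I * (l : ℂ) * (t : ℂ)) • a t)) →
      IsErgodic J (fun t : ℝ => Complex.exp (-(Complex.I * (ω : ℂ) * (t : ℂ))) • F t)) ∧
    ((∀ a ∈ A, ∀ l : ℝ,
        ErgodicMean J (fun t : ℝ => Complex.exp (Complex.I * (l : ℂ) * (t : ℂ)) • a t) 0) →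
      ErgodicMean J (fun t : ℝ => Complex.exp (-(Complex.I * (ω : ℂ) * (t : ℂ))) • F t) 0) := by
  classical
  simp only [spS, Set.mem_setOf_eq] at hω
  push_neg at hω
  obtain ⟨φ, hφA, hφft⟩ := hω
  obtain ⟨C, hC⟩ := hF.2.1
  have hC0 : 0 ≤ C := le_trans (norm_nonneg _) (hC 0)
  obtain ⟨G₀, hG₀m, hFG₀⟩ := hF.1
  set S : Set ℝ := {u | ‖G₀ u‖ ≤ C} with hS
  have hSm : MeasurableSet S := measurableSet_le hG₀m.norm.measurable measurable_const
  set G : ℝ → X := S.indicator G₀ with hG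
  have hGm : StronglyMeasurable G := hG₀m.indicator hSm
  have hGb : ∀ u, ‖G u‖ ≤ C := by
    intro u
    by_cases hu : u ∈ S
    · rw [hG, Set.indicator_of_mem hu]; exact hu
    · rw [hG, Set.indicator_of_notMem hu, norm_zero]; exact hC0
  have hFG : F =ᵐ[volume] G := by
    filter_upwards [hFG₀] with u hu
    have hmem : u ∈ S := by
      rw [hS]; simp only [Set.mem_setOf_eq]
      rw [← hu]; exact hC u
    rw [hG, Set.indicator_of_mem hmem, hu]
  set c : ℂ := ft (fun t => φ t) ω with hc
  set φ' : SchwartzMap ℝ ℂ := c⁻¹ • φ with hφ'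
  have hφ'app : ∀ u, φ' u = c⁻¹ * φ u := fun u => rfl
  have hft' : ft (fun u => φ' u) ω = 1 := by
    have hstep : ft (fun u => φ' u) ω = c⁻¹ * ft (fun t => φ t) ω := by
      unfold ft
      rw [← MeasureTheory.integral_const_mul]
      congr 1
      funext u
      simp only [hφ'app]
      ring
    rw [hstep, ← hc]
    exact inv_mul_cancel₀ hφft
  have haA : J.indicator (convol F (fun u => φ' u)) ∈ A := by
    have h1 : convol F (fun u => φ' u) = fun t => c⁻¹ • convol F (fun u => φ u) t := by
      funext t
      unfold convol
      rw [← MeasureTheory.integral_smul]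
      congr 1
      funext s
      simp only [hφ'app, mul_smul]
    have h2 : J.indicator (fun t => c⁻¹ • convol F (fun u => φ u) t)
        = fun t => c⁻¹ • (J.indicator (convol F (fun u => φ u)) t) := by
      funext t
      by_cases htJ : t ∈ J
      · rw [Set.indicator_of_mem htJ, Set.indicator_of_mem htJ]
      · rw [Set.indicator_of_notMem htJ, Set.indicator_of_notMem htJ, smul_zero]
    rw [h1, h2]
    exact hA.smul_mem c⁻¹ _ hφA
  have hconvFG : ∀ t : ℝ, convol F (fun u => φ' u) t = convol G (fun u => φ' u) t := by
    intro t
    unfold convol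
    apply integral_congr_ae
    have hmp := (Measure.measurePreserving_sub_left volume t).quasiMeasurePreserving.ae_eq hFG
    filter_upwards [hmp] with s hs
    simp only [Function.comp_apply] at hs
    rw [hs]
  set a : ℝ → X := J.indicator (convol F (fun u => φ' u)) with haa
  have haG : a = J.indicator (convol G (fun u => φ' u)) := by
    rw [haa, funext hconvFG]
  set K : ℝ := ∫ r : ℝ, ‖φ' r‖ * (2 * C * |r|) with hKdef
  have hK0 : 0 ≤ K := by
    rw [hKdef]
    apply integral_nonneg
    intro r
    positivity
  have hkeyF : ∀ T : ℝ, 0 < T → ∀ t ∈ J,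
      ‖(1 / T) • (∫ s in (0:ℝ)..T,
          Complex.exp (-(Complex.I * (ω : ℂ) * ((t + s : ℝ) : ℂ))) • F (t + s))
        - (1 / T) • (∫ s in (0:ℝ)..T,
          Complex.exp (-(Complex.I * (ω : ℂ) * ((t + s : ℝ) : ℂ))) • a (t + s))‖ ≤ K / T := by
    intro T hT t ht
    have hFint : (∫ s in (0:ℝ)..T,
          Complex.exp (-(Complex.I * (ω : ℂ) * ((t + s : ℝ) : ℂ))) • F (t + s))
        = ∫ s in (0:ℝ)..T,
          Complex.exp (-(Complex.I * (ω : ℂ) * ((t + s : ℝ) : ℂ))) • G (t + s) := by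
      apply intervalIntegral.integral_congr_ae
      have hmp := (measurePreserving_add_left volume t).quasiMeasurePreserving.ae_eq hFG
      filter_upwards [hmp] with s hs _
      simp only [Function.comp_apply] at hs
      rw [hs]
    rw [hFint, haG]
    have hkey := key_est J hJ G hGm C hGb φ' ω hft' T hT t ht
    rw [← smul_sub, norm_smul, Real.norm_eq_abs,
      abs_of_pos (by positivity : (0:ℝ) < 1 / T)]
    refine le_trans (mul_le_mul_of_nonneg_left hkey (by positivity)) (le_of_eq ?_)
    rw [← hKdef]
    ring
  have herg : ∀ m : X,
      ErgodicMean J (fun t : ℝ => Complex.exp (Complex.I * ((-ω : ℝ) : ℂ) * (t : ℂ)) • a t) m →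
      ErgodicMean J (fun t : ℝ => Complex.exp (-(Complex.I * (ω : ℂ) * (t : ℂ))) • F t) m := by
    intro m hm
    have hfun : (fun t : ℝ => Complex.exp (Complex.I * ((-ω : ℝ) : ℂ) * (t : ℂ)) • a t)
        = fun t : ℝ => Complex.exp (-(Complex.I * (ω : ℂ) * (t : ℂ))) • a t := by
      funext t
      congr 2
      push_cast
      ring
    rw [hfun] at hm
    exact transfer_ergodic J _ _ m K hK0 hkeyF hm
  constructor
  · intro h
    obtain ⟨m, hm⟩ := h a haA (-ω)
    exact ⟨m, herg m hm⟩
  · intro h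
    exact herg 0 (h a haA (-ω))
end
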